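/- arXiv:2002.12081 — 8 statements merged into one kernel-verified Lean document; each statement's English description precedes it below -/
import Mathlib

section
/- Assume there is an invertible X ∈ ℝ^{s×s} with ‖X^{−1}B_nX‖_∞ ≤ 1 for all n = 1,…,N. Then for every block vector W ∈ ℝ^{(N+1)s}, the solution of the linear system satisfies ‖M^{−1}W‖_X ≤ (#W)·‖W‖_X, where #W is the number of nonzero blocks of W. -/
open Matrix

/-- The block lower bidiagonal matrix `M` with blocks `M_{nn} = I_s`,
`M_{n,n-1} = -B_n` (for `1 ≤ n ≤ N`) and `M_{nk} = 0` otherwise. -/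
noncomputable def bigM (s N : ℕ) (B : ℕ → Matrix (Fin s) (Fin s) ℝ) :
    Matrix (Fin (N + 1) × Fin s) (Fin (N + 1) × Fin s) ℝ :=
  Matrix.of fun p q =>
    if (p.1 : ℕ) = (q.1 : ℕ) then (if p.2 = q.2 then 1 else 0)
    else if (p.1 : ℕ) = (q.1 : ℕ) + 1 then -(B (p.1 : ℕ) p.2 q.2) else 0

/-- The maximum norm `‖v‖_∞ = max_i |v_i|` of a vector. -/
noncomputable def vnormInf {s : ℕ} (v : Fin s → ℝ) : ℝ := ⨆ i, |v i|

/-- The maximum row sum norm `‖A‖_∞ = max_i ∑_j |a_{ij}|` of a matrix. -/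
noncomputable def mnormInf {s : ℕ} (A : Matrix (Fin s) (Fin s) ℝ) : ℝ :=
  ⨆ i, ∑ j, |A i j|

section auxnorm
variable {s : ℕ}

lemma vnormInf_nonneg (v : Fin s → ℝ) : 0 ≤ vnormInf v :=
  Real.iSup_nonneg fun i => abs_nonneg _

lemma le_vnormInf (v : Fin s → ℝ) (i : Fin s) : |v i| ≤ vnormInf v := by
  exact le_ciSup (f := fun i => |v i|) (Set.Finite.bddAbove (Set.finite_range _)) i

lemma vnormInf_le [Nonempty (Fin s)] {v : Fin s → ℝ} {a : ℝ} (h : ∀ i, |v i| ≤ a) :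
    vnormInf v ≤ a := ciSup_le h

lemma vnormInf_zero [Nonempty (Fin s)] : vnormInf (fun _ => (0 : ℝ) : Fin s → ℝ) = 0 := by
  simp [vnormInf]

lemma mnormInf_nonneg (A : Matrix (Fin s) (Fin s) ℝ) : 0 ≤ mnormInf A :=
  Real.iSup_nonneg fun i => Finset.sum_nonneg fun j _ => abs_nonneg _

lemma rowsum_le_mnormInf (A : Matrix (Fin s) (Fin s) ℝ) (i : Fin s) :
    ∑ j, |A i j| ≤ mnormInf A := by
  exact le_ciSup (f := fun i => ∑ j, |A i j|) (Set.Finite.bddAbove (Set.finite_range _)) i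

lemma mnormInf_one [Nonempty (Fin s)] : mnormInf (1 : Matrix (Fin s) (Fin s) ℝ) ≤ 1 := by
  apply ciSup_le
  intro i
  have : ∀ j, |(1 : Matrix (Fin s) (Fin s) ℝ) i j| = if i = j then 1 else 0 := by
    intro j
    by_cases h : i = j <;> simp [Matrix.one_apply, h]
  simp only [this]
  simp

lemma mnormInf_mul_le [Nonempty (Fin s)] (A C : Matrix (Fin s) (Fin s) ℝ) :
    mnormInf (A * C) ≤ mnormInf A * mnormInf C := by
  apply ciSup_le
  intro i
  calc ∑ j, |(A * C) i j| ≤ ∑ j, ∑ l, |A i l| * |C l j| := by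
        apply Finset.sum_le_sum
        intro j _
        rw [Matrix.mul_apply]
        refine (Finset.abs_sum_le_sum_abs _ _).trans ?_
        apply Finset.sum_le_sum
        intro l _
        rw [abs_mul]
    _ = ∑ l, |A i l| * ∑ j, |C l j| := by
        rw [Finset.sum_comm]
        simp [Finset.mul_sum]
    _ ≤ ∑ l, |A i l| * mnormInf C := by
        apply Finset.sum_le_sum
        intro l _
        exact mul_le_mul_of_nonneg_left (rowsum_le_mnormInf C l) (abs_nonneg _)
    _ = (∑ l, |A i l|) * mnormInf C := by rw [Finset.sum_mul]
    _ ≤ mnormInf A * mnormInf C :=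
        mul_le_mul_of_nonneg_right (rowsum_le_mnormInf A i) (mnormInf_nonneg C)

lemma vnormInf_mulVec [Nonempty (Fin s)] (A : Matrix (Fin s) (Fin s) ℝ) (v : Fin s → ℝ) :
    vnormInf (A *ᵥ v) ≤ mnormInf A * vnormInf v := by
  apply vnormInf_le
  intro i
  calc |(A *ᵥ v) i| ≤ ∑ j, |A i j| * |v j| := by
        rw [Matrix.mulVec, dotProduct]
        refine (Finset.abs_sum_le_sum_abs _ _).trans ?_
        apply Finset.sum_le_sum; intro j _; rw [abs_mul]
    _ ≤ ∑ j, |A i j| * vnormInf v := by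
        apply Finset.sum_le_sum
        intro j _
        exact mul_le_mul_of_nonneg_left (le_vnormInf v j) (abs_nonneg _)
    _ = (∑ j, |A i j|) * vnormInf v := by rw [Finset.sum_mul]
    _ ≤ mnormInf A * vnormInf v :=
        mul_le_mul_of_nonneg_right (rowsum_le_mnormInf A i) (vnormInf_nonneg v)

lemma vnormInf_sum [Nonempty (Fin s)] {ι : Type*} (t : Finset ι) (f : ι → Fin s → ℝ) :
    vnormInf (fun i => ∑ k ∈ t, f k i) ≤ ∑ k ∈ t, vnormInf (f k) := by
  apply vnormInf_le
  intro i
  refine (Finset.abs_sum_le_sum_abs _ _).trans ?_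
  exact Finset.sum_le_sum fun k _ => le_vnormInf (f k) i

end auxnorm

/-- `prodB B k n = B_n * B_{n-1} * ⋯ * B_{k+1}` (and `1` if `n ≤ k`). -/
noncomputable def prodB {s : ℕ} (B : ℕ → Matrix (Fin s) (Fin s) ℝ) (k : ℕ) :
    ℕ → Matrix (Fin s) (Fin s) ℝ
  | 0 => 1
  | n + 1 => if n + 1 ≤ k then 1 else B (n + 1) * prodB B k n

lemma prodB_of_le {s : ℕ} (B : ℕ → Matrix (Fin s) (Fin s) ℝ) {k n : ℕ} (h : n ≤ k) :
    prodB B k n = 1 := by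
  cases n with
  | zero => rfl
  | succ m =>
    have : m + 1 ≤ k := h
    simp [prodB, this]

lemma prodB_succ {s : ℕ} (B : ℕ → Matrix (Fin s) (Fin s) ℝ) {k n : ℕ} (h : k ≤ n) :
    prodB B k (n + 1) = B (n + 1) * prodB B k n := by
  have : ¬ (n + 1 ≤ k) := by omega
  simp [prodB, this]

lemma prodB_conj_norm {s N : ℕ} [Nonempty (Fin s)] (B : ℕ → Matrix (Fin s) (Fin s) ℝ)
    (X : Matrix (Fin s) (Fin s) ℝ) (hX : IsUnit X)
    (hB : ∀ n : ℕ, 1 ≤ n → n ≤ N → mnormInf (X⁻¹ * B n * X) ≤ 1) :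
    ∀ n : ℕ, n ≤ N → ∀ k : ℕ, mnormInf (X⁻¹ * prodB B k n * X) ≤ 1 := by
  have hXX : X⁻¹ * X = 1 := Matrix.nonsing_inv_mul X ((Matrix.isUnit_iff_isUnit_det X).mp hX)
  have hXX' : X * X⁻¹ = 1 := Matrix.mul_nonsing_inv X ((Matrix.isUnit_iff_isUnit_det X).mp hX)
  have hone : ∀ k n : ℕ, n ≤ k → mnormInf (X⁻¹ * prodB B k n * X) ≤ 1 := by
    intro k n h
    rw [prodB_of_le B h, mul_one, hXX]
    exact mnormInf_one
  intro n
  induction n with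
  | zero => intro _ k; exact hone k 0 (Nat.zero_le k)
  | succ m ih =>
    intro hm k
    by_cases hk : m + 1 ≤ k
    · exact hone k (m + 1) hk
    · have hk' : k ≤ m := Nat.lt_succ_iff.mp (Nat.lt_of_not_le hk)
      rw [prodB_succ B hk']
      have : X⁻¹ * (B (m + 1) * prodB B k m) * X
          = (X⁻¹ * B (m + 1) * X) * (X⁻¹ * prodB B k m * X) := by
        have h2 : (X⁻¹ * B (m + 1) * X) * (X⁻¹ * prodB B k m * X)
            = X⁻¹ * (B (m + 1) * ((X * X⁻¹) * (prodB B k m * X))) := by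
          simp only [Matrix.mul_assoc]
        rw [h2, hXX', Matrix.one_mul]
        simp only [Matrix.mul_assoc]
      rw [this]
      calc mnormInf _ ≤ mnormInf (X⁻¹ * B (m + 1) * X) * mnormInf (X⁻¹ * prodB B k m * X) :=
            mnormInf_mul_le _ _
        _ ≤ 1 * 1 := by
            apply mul_le_mul (hB (m+1) (Nat.succ_le_succ (Nat.zero_le m)) hm)
              (ih (Nat.le_of_succ_le hm) k) (mnormInf_nonneg _) zero_le_one
        _ = 1 := mul_one 1

/-- Candidate solution of `M V = W`. -/
noncomputable def Vsol {s N : ℕ} (B : ℕ → Matrix (Fin s) (Fin s) ℝ)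
    (W : Fin (N + 1) → Fin s → ℝ) (n : Fin (N + 1)) (i : Fin s) : ℝ :=
  ∑ k : Fin (N + 1), if (k : ℕ) ≤ (n : ℕ) then (prodB B (k : ℕ) (n : ℕ) *ᵥ W k) i else 0

lemma bigM_mulVec_Vsol {s N : ℕ} (B : ℕ → Matrix (Fin s) (Fin s) ℝ)
    (W : Fin (N + 1) → Fin s → ℝ) :
    bigM s N B *ᵥ (fun p => Vsol B W p.1 p.2) = fun p => W p.1 p.2 := by
  funext p
  obtain ⟨n, i⟩ := p
  rw [Matrix.mulVec, dotProduct, Fintype.sum_prod_type]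
  have hrow : ∀ m : Fin (N + 1),
      (∑ l : Fin s, bigM s N B (n, i) (m, l) * Vsol B W m l)
      = (if (n : ℕ) = (m : ℕ) then Vsol B W m i
         else if (n : ℕ) = (m : ℕ) + 1 then -∑ l, B (n : ℕ) i l * Vsol B W m l else 0) := by
    intro m
    by_cases h1 : (n : ℕ) = (m : ℕ)
    · simp only [bigM, Matrix.of_apply, h1, if_pos rfl]
      simp [ite_mul, Finset.sum_ite_eq]
    · by_cases h2 : (n : ℕ) = (m : ℕ) + 1
      · simp only [bigM, Matrix.of_apply, if_neg h1, if_pos h2, if_neg h1]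
        rw [← Finset.sum_neg_distrib]
        congr 1; funext l; ring
      · simp [bigM, h1, h2]
  simp only [hrow]
  rcases Nat.eq_zero_or_eq_succ_pred (n : ℕ) with h0 | hsucc
  · -- n = 0 case
    have hn0 : n = (⟨0, Nat.succ_pos N⟩ : Fin (N + 1)) := Fin.ext h0
    subst hn0
    rw [Finset.sum_eq_single (⟨0, Nat.succ_pos N⟩ : Fin (N + 1))]
    · simp only [if_pos rfl]
      unfold Vsol
      rw [Finset.sum_eq_single (⟨0, Nat.succ_pos N⟩ : Fin (N + 1))]
      · simp [prodB_of_le B (le_refl 0), Matrix.one_mulVec]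
      · intro k _ hk
        have : ¬ ((k : ℕ) ≤ 0) := by
          intro h; exact hk (Fin.ext (Nat.le_zero.mp h))
        simp [this]
      · intro h; exact absurd (Finset.mem_univ _) h
    · intro m _ hm
      have h1 : ¬ ((0 : ℕ) = (m : ℕ)) := fun h => hm (Fin.ext h.symm)
      have h2 : ¬ ((0 : ℕ) = (m : ℕ) + 1) := by omega
      simp [h1, h2]
    · intro h; exact absurd (Finset.mem_univ _) h
  · -- n = m₀ + 1 case
    set m₀ : ℕ := (n : ℕ).pred with hm₀def
    have hn' : (n : ℕ) = m₀ + 1 := hsucc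
    have hm₀lt : m₀ < N + 1 := by have := n.isLt; omega
    set mp : Fin (N + 1) := ⟨m₀, hm₀lt⟩ with hmp
    have hmpval : (mp : ℕ) = m₀ := rfl
    have hne : n ≠ mp := by
      intro h
      have : (n : ℕ) = m₀ := by rw [h]
      omega
    rw [← Finset.sum_subset (Finset.subset_univ ({n, mp} : Finset (Fin (N + 1))))
      (by
        intro m _ hm
        simp only [Finset.mem_insert, Finset.mem_singleton] at hm
        push_neg at hm
        have h1 : ¬ ((n : ℕ) = (m : ℕ)) := fun h => hm.1 (Fin.ext h.symm)
        have h2 : ¬ ((n : ℕ) = (m : ℕ) + 1) := by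
          intro h
          apply hm.2
          apply Fin.ext
          omega
        simp [h1, h2])]
    rw [Finset.sum_insert (by simp [hne]), Finset.sum_singleton]
    have hv1 : ¬ ((n : ℕ) = (mp : ℕ)) := by omega
    have hv2 : (n : ℕ) = (mp : ℕ) + 1 := by omega
    rw [if_pos rfl, if_neg hv1, if_pos hv2]
    have hsecond : (∑ l, B (n : ℕ) i l * Vsol B W mp l)
        = ∑ k : Fin (N + 1), if (k : ℕ) ≤ m₀
            then ((B (n : ℕ) * prodB B (k : ℕ) m₀) *ᵥ W k) i else 0 := by
      unfold Vsol
      simp only [hmpval]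
      calc (∑ l, B (n : ℕ) i l *
              ∑ k : Fin (N + 1), if (k : ℕ) ≤ m₀ then (prodB B (k : ℕ) m₀ *ᵥ W k) l else 0)
          = ∑ l, ∑ k : Fin (N + 1),
              B (n : ℕ) i l * (if (k : ℕ) ≤ m₀ then (prodB B (k : ℕ) m₀ *ᵥ W k) l else 0) := by
            simp [Finset.mul_sum]
        _ = ∑ k : Fin (N + 1), ∑ l,
              B (n : ℕ) i l * (if (k : ℕ) ≤ m₀ then (prodB B (k : ℕ) m₀ *ᵥ W k) l else 0) :=
            Finset.sum_comm
        _ = ∑ k : Fin (N + 1), if (k : ℕ) ≤ m₀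
              then ((B (n : ℕ) * prodB B (k : ℕ) m₀) *ᵥ W k) i else 0 := by
            apply Finset.sum_congr rfl
            intro k _
            by_cases hk : (k : ℕ) ≤ m₀
            · simp only [if_pos hk]
              rw [← Matrix.mulVec_mulVec, Matrix.mulVec, dotProduct]
            · simp [hk]
    rw [hsecond]
    have hfirst : Vsol B W n i
        = W n i + ∑ k : Fin (N + 1), if (k : ℕ) ≤ m₀
            then ((B (n : ℕ) * prodB B (k : ℕ) m₀) *ᵥ W k) i else 0 := by
      unfold Vsol
      have hptwise : ∀ k : Fin (N + 1),
          (if (k : ℕ) ≤ (n : ℕ) then (prodB B (k : ℕ) (n : ℕ) *ᵥ W k) i else 0)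
          = (if k = n then W n i else 0)
            + (if (k : ℕ) ≤ m₀ then ((B (n : ℕ) * prodB B (k : ℕ) m₀) *ᵥ W k) i else 0) := by
        intro k
        by_cases hkn : k = n
        · subst hkn
          have h1 : (k : ℕ) ≤ (k : ℕ) := le_refl _
          have h2 : ¬ ((k : ℕ) ≤ m₀) := by omega
          rw [if_pos h1, if_pos rfl, if_neg h2, add_zero]
          rw [prodB_of_le B (le_refl _), Matrix.one_mulVec]
        · have hkn' : (k : ℕ) ≠ (n : ℕ) := fun h => hkn (Fin.ext h)
          rw [if_neg hkn]
          by_cases hk : (k : ℕ) ≤ m₀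
          · have hk' : (k : ℕ) ≤ (n : ℕ) := by omega
            rw [if_pos hk', if_pos hk, zero_add]
            have : prodB B (k : ℕ) ((n : ℕ)) = B (n : ℕ) * prodB B (k : ℕ) m₀ := by
              rw [hn']
              exact prodB_succ B hk
            rw [this]
          · have hk' : ¬ ((k : ℕ) ≤ (n : ℕ)) := by omega
            rw [if_neg hk', if_neg hk, add_zero]
      simp only [hptwise]
      rw [Finset.sum_add_distrib, Finset.sum_ite_eq' Finset.univ n fun _ => W n i,
        if_pos (Finset.mem_univ n)]
    rw [hfirst]
    ring

/-- if there is an invertible `X` with `‖X⁻¹ B_n X‖_∞ ≤ 1` for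
`n = 1,…,N`, then for every block vector `W`, the solution `M⁻¹W` of the linear
system satisfies `‖M⁻¹W‖_X ≤ (#W)·‖W‖_X, where `#W` is the number of nonzero
blocks of `W`, `‖W_n‖_X = ‖X⁻¹W_n‖_∞` and `‖W‖_X = max_n ‖W_n‖_X`. -/
theorem stmt3 (s N : ℕ) (hs : 1 ≤ s) (hN : 1 ≤ N)
    (B : ℕ → Matrix (Fin s) (Fin s) ℝ)
    (X : Matrix (Fin s) (Fin s) ℝ) (hX : IsUnit X)
    (hB : ∀ n : ℕ, 1 ≤ n → n ≤ N → mnormInf (X⁻¹ * B n * X) ≤ 1)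
    (W : Fin (N + 1) → Fin s → ℝ) :
    (⨆ n : Fin (N + 1),
        vnormInf (X⁻¹ *ᵥ fun i => ((bigM s N B)⁻¹ *ᵥ fun p => W p.1 p.2) (n, i)))
      ≤ (Nat.card {n : Fin (N + 1) // W n ≠ 0} : ℝ) *
          ⨆ n : Fin (N + 1), vnormInf (X⁻¹ *ᵥ W n) := by
  have hsfin : Nonempty (Fin s) := ⟨⟨0, hs⟩⟩
  have hdet : IsUnit X.det := (Matrix.isUnit_iff_isUnit_det X).mp hX
  have hXX' : X * X⁻¹ = 1 := Matrix.mul_nonsing_inv X hdet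
  -- M is invertible
  have hsurj : Function.Surjective (bigM s N B).mulVec := by
    intro w
    refine ⟨fun p => Vsol B (fun n i => w (n, i)) p.1 p.2, ?_⟩
    rw [bigM_mulVec_Vsol]
  have hMunit : IsUnit (bigM s N B) := Matrix.mulVec_surjective_iff_isUnit.mp hsurj
  have hMdet : IsUnit (bigM s N B).det := (Matrix.isUnit_iff_isUnit_det _).mp hMunit
  have hsol : ((bigM s N B)⁻¹ *ᵥ fun p => W p.1 p.2) = fun p => Vsol B W p.1 p.2 := by
    conv_lhs => rw [← bigM_mulVec_Vsol B W]
    rw [Matrix.mulVec_mulVec, Matrix.nonsing_inv_mul _ hMdet, Matrix.one_mulVec]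
  simp only [hsol]
  set supW := ⨆ m : Fin (N + 1), vnormInf (X⁻¹ *ᵥ W m) with hsupW
  have hsupW0 : 0 ≤ supW := Real.iSup_nonneg fun m => vnormInf_nonneg _
  have hleW : ∀ m : Fin (N + 1), vnormInf (X⁻¹ *ᵥ W m) ≤ supW := by
    intro m
    exact le_ciSup (f := fun m => vnormInf (X⁻¹ *ᵥ W m))
      (Set.Finite.bddAbove (Set.finite_range _)) m
  apply ciSup_le
  intro n
  have hnN : (n : ℕ) ≤ N := Nat.lt_succ_iff.mp n.isLt
  have hvec : (X⁻¹ *ᵥ fun i => Vsol B W n i)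
      = fun i => ∑ k : Fin (N + 1), if (k : ℕ) ≤ (n : ℕ)
          then (((X⁻¹ * prodB B (k : ℕ) (n : ℕ) * X) *ᵥ (X⁻¹ *ᵥ W k)) i) else 0 := by
    funext i
    show (X⁻¹ *ᵥ fun j => Vsol B W n j) i = _
    rw [Matrix.mulVec, dotProduct]
    unfold Vsol
    calc (∑ j, X⁻¹ i j *
            ∑ k : Fin (N + 1), if (k : ℕ) ≤ (n : ℕ)
              then (prodB B (k : ℕ) (n : ℕ) *ᵥ W k) j else 0)
        = ∑ j, ∑ k : Fin (N + 1), X⁻¹ i j *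
            (if (k : ℕ) ≤ (n : ℕ) then (prodB B (k : ℕ) (n : ℕ) *ᵥ W k) j else 0) := by
          simp [Finset.mul_sum]
      _ = ∑ k : Fin (N + 1), ∑ j, X⁻¹ i j *
            (if (k : ℕ) ≤ (n : ℕ) then (prodB B (k : ℕ) (n : ℕ) *ᵥ W k) j else 0) :=
          Finset.sum_comm
      _ = ∑ k : Fin (N + 1), if (k : ℕ) ≤ (n : ℕ)
            then (((X⁻¹ * prodB B (k : ℕ) (n : ℕ) * X) *ᵥ (X⁻¹ *ᵥ W k)) i) else 0 := by
          apply Finset.sum_congr rfl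
          intro k _
          by_cases hk : (k : ℕ) ≤ (n : ℕ)
          · simp only [if_pos hk]
            have h1 : (∑ j, X⁻¹ i j * (prodB B (k : ℕ) (n : ℕ) *ᵥ W k) j)
                = ((X⁻¹ * prodB B (k : ℕ) (n : ℕ)) *ᵥ W k) i := by
              rw [← Matrix.mulVec_mulVec, Matrix.mulVec, dotProduct]
            rw [h1]
            have h2 : (X⁻¹ * prodB B (k : ℕ) (n : ℕ) * X) *ᵥ (X⁻¹ *ᵥ W k)
                = ((X⁻¹ * prodB B (k : ℕ) (n : ℕ)) * (X * X⁻¹)) *ᵥ W k := by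
              rw [Matrix.mulVec_mulVec, Matrix.mul_assoc (X⁻¹ * prodB B (k : ℕ) (n : ℕ)) X X⁻¹]
            rw [h2, hXX', Matrix.mul_one]
          · simp [hk]
  rw [hvec]
  calc vnormInf (fun i => ∑ k : Fin (N + 1), if (k : ℕ) ≤ (n : ℕ)
          then (((X⁻¹ * prodB B (k : ℕ) (n : ℕ) * X) *ᵥ (X⁻¹ *ᵥ W k)) i) else 0)
      ≤ ∑ k : Fin (N + 1), vnormInf (fun i => if (k : ℕ) ≤ (n : ℕ)
          then (((X⁻¹ * prodB B (k : ℕ) (n : ℕ) * X) *ᵥ (X⁻¹ *ᵥ W k)) i) else 0) :=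
        vnormInf_sum Finset.univ _
    _ ≤ ∑ k : Fin (N + 1), (if W k ≠ 0 then supW else 0) := by
        apply Finset.sum_le_sum
        intro k _
        by_cases hk : (k : ℕ) ≤ (n : ℕ)
        · simp only [if_pos hk]
          by_cases hWk : W k = 0
          · rw [if_neg (by simp [hWk])]
            have : (fun i => ((X⁻¹ * prodB B (k : ℕ) (n : ℕ) * X) *ᵥ (X⁻¹ *ᵥ W k)) i)
                = fun _ => (0 : ℝ) := by
              funext i
              rw [hWk, Matrix.mulVec_zero, Matrix.mulVec_zero]
              simp
            rw [this, vnormInf_zero]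
          · rw [if_pos hWk]
            calc vnormInf (fun i => ((X⁻¹ * prodB B (k : ℕ) (n : ℕ) * X) *ᵥ (X⁻¹ *ᵥ W k)) i)
                = vnormInf ((X⁻¹ * prodB B (k : ℕ) (n : ℕ) * X) *ᵥ (X⁻¹ *ᵥ W k)) := rfl
              _ ≤ mnormInf (X⁻¹ * prodB B (k : ℕ) (n : ℕ) * X) * vnormInf (X⁻¹ *ᵥ W k) :=
                  vnormInf_mulVec _ _
              _ ≤ 1 * supW := by
                  apply mul_le_mul (prodB_conj_norm B X hX hB (n : ℕ) hnN (k : ℕ))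
                    (hleW k) (vnormInf_nonneg _) zero_le_one
              _ = supW := one_mul supW
        · simp only [if_neg hk]
          rw [vnormInf_zero]
          by_cases hWk : W k = 0
          · rw [if_neg (by simp [hWk])]
          · rw [if_pos hWk]; exact hsupW0
    _ = ((Finset.univ.filter (fun k : Fin (N + 1) => W k ≠ 0)).card : ℝ) * supW := by
        rw [Finset.sum_ite, Finset.sum_const, Finset.sum_const_zero, add_zero,
          nsmul_eq_mul]
    _ = (Nat.card {n : Fin (N + 1) // W n ≠ 0} : ℝ) * supW := by
        rw [Nat.card_eq_fintype_card, Fintype.card_subtype]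
end

section
/- Let the nodes c ∈ ℝ^s be symmetric with parameter ζ ∈ ℝ, i.e. Πc = ζ·1 − c. Then for every q ∈ ℕ, Π V_q(c) = V_q(c) Δ_q 𝒫_q^ζ. -/
open Matrix

/-- The Vandermonde matrix `V_q(c) ∈ ℝ^{s×q}` with entries `c_i^{j-1}`. -/
noncomputable def vand {s : ℕ} (c : Fin s → ℝ) (q : ℕ) : Matrix (Fin s) (Fin q) ℝ :=
  Matrix.of fun i j => c i ^ (j : ℕ)

/-- The flip permutation matrix `Π ∈ ℝ^{s×s}`, with `Π_{ij} = 1` iff `j = s+1-i`. -/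
noncomputable def flipPerm (s : ℕ) : Matrix (Fin s) (Fin s) ℝ :=
  Matrix.of fun i j => if (i : ℕ) + (j : ℕ) = s - 1 then 1 else 0

/-- The diagonal sign matrix `Δ_q` with diagonal entries `(-1)^{i-1}`. -/
noncomputable def deltaSign (q : ℕ) : Matrix (Fin q) (Fin q) ℝ :=
  Matrix.of fun i j => if i = j then (-1 : ℝ) ^ (i : ℕ) else 0

/-- The generalized Pascal matrix `𝒫_q^ζ` with entries `C(j-1,i-1)·ζ^{j-i}`
for `i ≤ j` and `0` otherwise. -/
noncomputable def pascalZ (q : ℕ) (ζ : ℝ) : Matrix (Fin q) (Fin q) ℝ :=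
  Matrix.of fun i j => ((j : ℕ).choose (i : ℕ) : ℝ) * ζ ^ ((j : ℕ) - (i : ℕ))

/-- Summing against a row of the flip permutation picks out the flipped entry. -/
lemma flip_sum {s : ℕ} (f : Fin s → ℝ) (i : Fin s) :
    ∑ j : Fin s, (if (i : ℕ) + (j : ℕ) = s - 1 then (1:ℝ) else 0) * f j
      = f ⟨s - 1 - (i:ℕ), by have := i.isLt; omega⟩ := by
  rw [Finset.sum_eq_single (⟨s - 1 - (i:ℕ), by have := i.isLt; omega⟩ : Fin s)]
  · have : (i : ℕ) + (s - 1 - (i:ℕ)) = s - 1 := by have := i.isLt; omega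
    simp [this]
  · intro b _ hb
    have : ¬((i:ℕ) + (b:ℕ) = s - 1) := by
      intro h; exact hb (Fin.ext (show (b:ℕ) = s - 1 - (i:ℕ) by omega))
    simp [this]
  · intro h; exact absurd (Finset.mem_univ _) h

/-- if the nodes `c` are symmetric with parameter `ζ`,
i.e. `Πc = ζ·1 - c`, then `Π V_q(c) = V_q(c) Δ_q 𝒫_q^ζ` for every `q`. -/
theorem stmt9 (s : ℕ) (c : Fin s → ℝ) (ζ : ℝ)
    (hsym : flipPerm s *ᵥ c = fun i => ζ - c i) (q : ℕ) :
    flipPerm s * vand c q = vand c q * deltaSign q * pascalZ q ζ := by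
  ext i k
  have hc : c ⟨s - 1 - (i:ℕ), by have := i.isLt; omega⟩ = ζ - c i := by
    have h := congrFun hsym i
    simp only [flipPerm, mulVec, dotProduct, Matrix.of_apply] at h
    rw [flip_sum c i] at h
    exact h
  have hL : (flipPerm s * vand c q) i k = (ζ - c i) ^ (k : ℕ) := by
    simp only [Matrix.mul_apply, flipPerm, vand, Matrix.of_apply]
    rw [flip_sum (fun j => c j ^ (k:ℕ)) i]
    simp [hc]
  rw [hL]
  simp only [Matrix.mul_apply, vand, deltaSign, pascalZ, Matrix.of_apply, mul_ite, mul_zero,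
    Finset.sum_ite_eq, Finset.sum_ite_eq', Finset.mem_univ, if_true]
  rw [Fin.sum_univ_eq_sum_range
    (fun j => c i ^ j * (-1:ℝ)^j * (((k:ℕ).choose j : ℝ) * ζ ^ ((k:ℕ) - j))) q]
  rw [← Finset.sum_subset (Finset.range_subset_range.mpr (by have := k.isLt; omega :
      (k:ℕ) + 1 ≤ q))]
  · rw [show ζ - c i = -c i + ζ by ring, add_pow]
    refine Finset.sum_congr rfl fun j hj => ?_
    rw [neg_pow]
    ring
  · intro j hj hj'
    simp only [Finset.mem_range] at hj hj'
    have : (k:ℕ).choose j = 0 := Nat.choose_eq_zero_of_lt (by omega)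
    simp [this]
end

section
/- Let the nodes c_1,…,c_s be pairwise distinct and symmetric with parameter ζ ∈ ℝ, i.e. Πc = ζ·1 − c. Then the differentiation matrix E = V_sẼ_sV_s^{−1} satisfies Π E Π = −E. -/
open Matrix

/-- The nilpotent matrix `Ẽ_q` whose only nonzero entries are `(Ẽ_q)_{i,i+1} = i`. -/
noncomputable def etil (q : ℕ) : Matrix (Fin q) (Fin q) ℝ :=
  Matrix.of fun i j => if (j : ℕ) = (i : ℕ) + 1 then ((i : ℕ) + 1 : ℝ) else 0

open Polynomial

lemma rev_add {s : ℕ} (i : Fin s) : (i : ℕ) + (Fin.rev i : ℕ) = s - 1 := by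
  have := i.isLt; simp [Fin.val_rev]; omega

lemma flip_cond {s : ℕ} (i k : Fin s) : (i : ℕ) + (k : ℕ) = s - 1 ↔ k = Fin.rev i := by
  constructor
  · intro h
    apply Fin.ext
    have h1 := i.isLt; have h2 := k.isLt
    simp [Fin.val_rev]; omega
  · rintro rfl; exact rev_add i

lemma Pmul {s : ℕ} (M : Matrix (Fin s) (Fin s) ℝ) (i j : Fin s) :
    (flipPerm s * M) i j = M (Fin.rev i) j := by
  rw [mul_apply, Finset.sum_eq_single (Fin.rev i)]
  · unfold flipPerm
    rw [Matrix.of_apply, if_pos (rev_add i), one_mul]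
  · intro k _ hk
    simp only [flipPerm, Matrix.of_apply, flip_cond, if_neg hk, zero_mul]
  · simp

lemma PmulVec {s : ℕ} (v : Fin s → ℝ) (i : Fin s) :
    (flipPerm s *ᵥ v) i = v (Fin.rev i) := by
  rw [mulVec, dotProduct, Finset.sum_eq_single (Fin.rev i)]
  · unfold flipPerm
    rw [Matrix.of_apply, if_pos (rev_add i), one_mul]
  · intro k _ hk
    simp only [flipPerm, Matrix.of_apply, flip_cond, if_neg hk, zero_mul]
  · simp

lemma mul_col {s q r : ℕ} (M : Matrix (Fin s) (Fin q) ℝ) (N : Matrix (Fin q) (Fin r) ℝ)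
    (i : Fin s) (j : Fin r) : (M * N) i j = (M *ᵥ fun k => N k j) i := by
  simp [mul_apply, mulVec, dotProduct]

lemma evalVec {s : ℕ} (c : Fin s → ℝ) (p : ℝ[X]) (hp : p.natDegree < s) (i : Fin s) :
    p.eval (c i) = (vand c s *ᵥ fun k : Fin s => p.coeff k) i := by
  rw [Polynomial.eval_eq_sum_range' hp]
  simp only [vand, mulVec, dotProduct, Matrix.of_apply]
  rw [← Fin.sum_univ_eq_sum_range (fun k => p.coeff k * c i ^ k) s]
  exact Finset.sum_congr rfl fun k _ => mul_comm _ _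

lemma etil_mulVec {s : ℕ} (p : ℝ[X]) (hp : p.natDegree < s) :
    (etil s *ᵥ fun k : Fin s => p.coeff k) = fun k : Fin s => p.derivative.coeff k := by
  funext k
  rw [mulVec, dotProduct, Polynomial.coeff_derivative]
  by_cases h : (k : ℕ) + 1 < s
  · rw [Finset.sum_eq_single (⟨(k : ℕ) + 1, h⟩ : Fin s)]
    · simp [etil]; ring
    · intro b _ hb
      have : (b : ℕ) ≠ (k : ℕ) + 1 := fun hb' => hb (Fin.ext hb')
      simp [etil, this]
    · simp
  · have hk1 : p.coeff ((k : ℕ) + 1) = 0 :=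
      Polynomial.coeff_eq_zero_of_natDegree_lt (by omega)
    rw [hk1]
    have : ∀ b : Fin s, etil s k b * p.coeff b = 0 := by
      intro b
      have : (b : ℕ) ≠ (k : ℕ) + 1 := by have := b.isLt; omega
      simp [etil, this]
    simp [this]

lemma vand_det_isUnit {s : ℕ} (c : Fin s → ℝ) (hc : Function.Injective c) :
    IsUnit (vand c s).det := by
  have : vand c s = Matrix.vandermonde c := rfl
  rw [this, isUnit_iff_ne_zero]
  exact Matrix.det_vandermonde_ne_zero_iff.mpr hc

lemma E_mulVec {s : ℕ} (c : Fin s → ℝ) (hc : Function.Injective c) (p : ℝ[X])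
    (hp : p.natDegree < s) :
    ((vand c s * etil s * (vand c s)⁻¹) *ᵥ fun i => p.eval (c i))
      = fun i => p.derivative.eval (c i) := by
  have hV := vand_det_isUnit c hc
  have hd : p.derivative.natDegree < s :=
    lt_of_le_of_lt (le_trans (Polynomial.natDegree_derivative_le p) (Nat.sub_le _ _)) hp
  funext i
  have h1 : (fun i => p.eval (c i)) = vand c s *ᵥ fun k : Fin s => p.coeff k :=
    funext fun i => evalVec c p hp i
  rw [h1, mulVec_mulVec, mul_assoc, Matrix.nonsing_inv_mul _ hV, mul_one,
    ← mulVec_mulVec, etil_mulVec p hp, ← evalVec c p.derivative hd i]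

/-- for pairwise distinct nodes that are symmetric with parameter `ζ`
(`Πc = ζ·1 - c`), the differentiation matrix `E = V_s Ẽ_s V_s⁻¹` satisfies
`Π E Π = -E`. -/
theorem stmt11 (s : ℕ) (c : Fin s → ℝ) (hc : Function.Injective c) (ζ : ℝ)
    (hsym : flipPerm s *ᵥ c = fun i => ζ - c i) :
    flipPerm s * (vand c s * etil s * (vand c s)⁻¹) * flipPerm s
      = -(vand c s * etil s * (vand c s)⁻¹) := by
  have hV := vand_det_isUnit c hc
  set V := vand c s with hVdef
  set E := V * etil s * V⁻¹ with hE
  set P := flipPerm s with hP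
  have hrev : ∀ i : Fin s, c (Fin.rev i) = ζ - c i := by
    intro i
    have := congrFun hsym i
    rwa [PmulVec] at this
  have hrev' : ∀ i : Fin s, ζ - c (Fin.rev i) = c i := by
    intro i
    have := hrev (Fin.rev i)
    rw [Fin.rev_rev] at this
    linarith
  have hEV : E * V = V * etil s := by
    rw [hE, mul_assoc, Matrix.nonsing_inv_mul _ hV, mul_one]
  have key : P * E * P * V = -(E * V) := by
    rw [hEV]
    funext i j
    have hW : ∀ (a : Fin s) (b : Fin s), (P * V) a b = (ζ - c a) ^ (b : ℕ) := by
      intro a b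
      rw [Pmul]
      show c (Fin.rev a) ^ (b : ℕ) = _
      rw [hrev a]
    set p : Polynomial ℝ := (Polynomial.C ζ - Polynomial.X) ^ (j : ℕ) with hp
    have hpdeg : p.natDegree < s := by
      have h1 : p.natDegree ≤ (j : ℕ) := by
        calc p.natDegree ≤ (j : ℕ) * (Polynomial.C ζ - Polynomial.X).natDegree :=
          Polynomial.natDegree_pow_le
        _ ≤ (j : ℕ) * 1 := by
          gcongr
          exact Polynomial.natDegree_sub_le_iff_left (by simp) |>.mpr (by simp)
        _ = (j : ℕ) := mul_one _
      exact lt_of_le_of_lt h1 j.isLt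
    have hcol : (fun k : Fin s => (P * V) k j) = fun k => p.eval (c k) := by
      funext k
      rw [hW k j, hp]
      simp
    have hEW : (E * (P * V)) (Fin.rev i) j = p.derivative.eval (c (Fin.rev i)) := by
      rw [mul_col, hcol, E_mulVec c hc p hpdeg]
    have hderiv : p.derivative.eval (c (Fin.rev i))
        = -(((j : ℕ) : ℝ) * c i ^ ((j : ℕ) - 1)) := by
      rw [hp, Polynomial.derivative_pow]
      simp only [Polynomial.derivative_sub, Polynomial.derivative_C, Polynomial.derivative_X,
        zero_sub, Polynomial.eval_mul, Polynomial.eval_neg, Polynomial.eval_one,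
        Polynomial.eval_pow, Polynomial.eval_sub, Polynomial.eval_C, Polynomial.eval_X,
        Polynomial.eval_natCast, hrev' i]
      ring
    have hassoc : (P * E * P * V) i j = (E * (P * V)) (Fin.rev i) j := by
      rw [mul_assoc (P * E) P V, mul_assoc P E (P * V), Pmul]
    have hRHS : (V * etil s) i j = ((j : ℕ) : ℝ) * c i ^ ((j : ℕ) - 1) := by
      rw [mul_apply]
      by_cases hj : (j : ℕ) = 0
      · simp [etil, hj]
      · have hj1 : (j : ℕ) - 1 < s := by have := j.isLt; omega
        rw [Finset.sum_eq_single (⟨(j : ℕ) - 1, hj1⟩ : Fin s)]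
        · have hcond : (j : ℕ) = (j : ℕ) - 1 + 1 := by omega
          rw [hVdef]
          unfold vand etil
          rw [Matrix.of_apply, Matrix.of_apply]
          simp only [Fin.val_mk]
          rw [if_pos hcond]
          have hc2 : (((j : ℕ) - 1 : ℕ) + 1 : ℝ) = (((j : ℕ) : ℕ) : ℝ) := by
            exact_mod_cast congrArg (Nat.cast : ℕ → ℝ) hcond.symm
          rw [hc2]
          ring
        · intro b _ hb
          have : (j : ℕ) ≠ (b : ℕ) + 1 := by
            intro h
            exact hb (Fin.ext (show (b : ℕ) = (j : ℕ) - 1 by omega))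
          simp [etil, this]
        · simp
    show (P * E * P * V) i j = (-(V * etil s)) i j
    rw [hassoc, hEW, hderiv, Matrix.neg_apply, hRHS]
  have hVV : V * V⁻¹ = 1 := Matrix.mul_nonsing_inv _ hV
  calc P * E * P = P * E * P * (V * V⁻¹) := by rw [hVV, mul_one]
    _ = (P * E * P * V) * V⁻¹ := (mul_assoc _ _ _).symm
    _ = -(E * V) * V⁻¹ := by rw [key]
    _ = -E := by rw [neg_mul, mul_assoc, hVV, mul_one]
end

section
/- Let q ∈ ℕ, let the nodes c ∈ ℝ^s be symmetric with parameter ζ ∈ ℝ (Πc = ζ·1 − c), and suppose A, K ∈ ℝ^{s×s} satisfy the Sylvester-type equation (S) with q_1 = q_2 = q. Then the pair (Π Aᵀ Π, Π Kᵀ Π) also satisfies (S) with q_1 = q_2 = q; consequently the persymmetric pair (½(A + ΠAᵀΠ), ½(K + ΠKᵀΠ)), which satisfies ΠXᵀΠ = X for both of its components, is also a solution of (S). -/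
open Matrix

/-- The upper triangular Pascal matrix `𝒫_q` with entries `C(j-1, i-1)`. -/
noncomputable def pascal (q : ℕ) : Matrix (Fin q) (Fin q) ℝ :=
  Matrix.of fun i j => ((j : ℕ).choose (i : ℕ) : ℝ)

/-- The Sylvester-type equation (S) with `q₁ = q₂ = q` for a pair `(A,K)`. -/
def SylvesterEq {s : ℕ} (c : Fin s → ℝ) (q : ℕ) (A K : Matrix (Fin s) (Fin s) ℝ) : Prop :=
  (vand c q * pascal q)ᵀ * A * (vand c q * pascal q) - (vand c q)ᵀ * A * vand c q
    = (vand c q * pascal q)ᵀ * K * (vand c q * pascal q * etil q)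
      + (vand c q * etil q)ᵀ * K * vand c q

/-! ### Auxiliary definitions and lemmas -/

/-- The matrix of the substitution `p(x) ↦ p(ζ+1-x)` in the monomial basis. -/
noncomputable def tmat (ζ : ℝ) (q : ℕ) : Matrix (Fin q) (Fin q) ℝ :=
  Matrix.of fun k j => (-1 : ℝ) ^ (k : ℕ) * ((j : ℕ).choose (k : ℕ) : ℝ) * (ζ + 1) ^ ((j : ℕ) - (k : ℕ))

lemma flip_mul_apply {s n : ℕ} (M : Matrix (Fin s) (Fin n) ℝ) (i : Fin s) (j : Fin n) :
    (flipPerm s * M) i j = M i.rev j := by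
  rw [Matrix.mul_apply, Finset.sum_eq_single i.rev]
  · rw [flipPerm]; simp only [Matrix.of_apply]
    rw [if_pos, one_mul]
    have := i.isLt; simp only [Fin.val_rev]; omega
  · intro b _ hb
    rw [flipPerm]; simp only [Matrix.of_apply]
    rw [if_neg, zero_mul]
    intro hc; apply hb; apply Fin.ext
    have := i.isLt; have := b.isLt; simp only [Fin.val_rev]; omega
  · intro h; exact absurd (Finset.mem_univ _) h

lemma flip_mulVec {s : ℕ} (v : Fin s → ℝ) (i : Fin s) :
    (flipPerm s *ᵥ v) i = v i.rev := by
  rw [Matrix.mulVec, dotProduct, Finset.sum_eq_single i.rev]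
  · rw [flipPerm]; simp only [Matrix.of_apply]
    rw [if_pos, one_mul]
    have := i.isLt; simp only [Fin.val_rev]; omega
  · intro b _ hb
    rw [flipPerm]; simp only [Matrix.of_apply]
    rw [if_neg, zero_mul]
    intro hc; apply hb; apply Fin.ext
    have := i.isLt; have := b.isLt; simp only [Fin.val_rev]; omega
  · intro h; exact absurd (Finset.mem_univ _) h

lemma flip_transpose (s : ℕ) : (flipPerm s)ᵀ = flipPerm s := by
  ext i j; simp only [Matrix.transpose_apply, flipPerm, Matrix.of_apply, Nat.add_comm]

lemma flip_flip' (s : ℕ) : flipPerm s * flipPerm s = 1 := by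
  ext i j
  rw [flip_mul_apply]
  simp only [flipPerm, Matrix.of_apply, Matrix.one_apply]
  have := i.isLt; have := j.isLt
  by_cases h : i = j
  · subst h; rw [if_pos, if_pos rfl]; simp only [Fin.val_rev]; omega
  · rw [if_neg, if_neg h]
    intro hc; apply h; apply Fin.ext; simp only [Fin.val_rev] at hc; omega

lemma sum_pow {q : ℕ} (j : Fin q) (x y : ℝ) :
    ∑ k : Fin q, x ^ (k : ℕ) * (((j : ℕ).choose (k : ℕ) : ℝ)) * y ^ ((j : ℕ) - (k : ℕ))
      = (x + y) ^ (j : ℕ) := by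
  rw [add_pow]
  rw [Fin.sum_univ_eq_sum_range (fun k => x ^ k * (((j : ℕ).choose k : ℝ)) * y ^ ((j : ℕ) - k)) q]
  rw [← Finset.sum_subset (Finset.range_subset_range.mpr j.isLt)]
  · exact Finset.sum_congr rfl fun k _ => by ring
  · intro k hk hk2
    simp only [Finset.mem_range] at hk hk2
    rw [Nat.choose_eq_zero_of_lt (by omega)]
    simp

lemma vp_apply {s : ℕ} (c : Fin s → ℝ) {q : ℕ} (i : Fin s) (j : Fin q) :
    (vand c q * pascal q) i j = (c i + 1) ^ (j : ℕ) := by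
  have h := sum_pow j (c i) 1
  simp only [one_pow, mul_one] at h
  rw [Matrix.mul_apply, ← h]
  exact Finset.sum_congr rfl fun k _ => by simp [vand, pascal]

lemma vt_apply {s : ℕ} (c : Fin s → ℝ) {q : ℕ} (ζ : ℝ) (i : Fin s) (j : Fin q) :
    (vand c q * tmat ζ q) i j = (ζ + 1 - c i) ^ (j : ℕ) := by
  have h := sum_pow j (-(c i)) (ζ + 1)
  rw [Matrix.mul_apply]
  rw [show (ζ + 1 - c i) = -(c i) + (ζ + 1) by ring, ← h]
  refine Finset.sum_congr rfl fun k _ => ?_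
  simp only [vand, tmat, Matrix.of_apply]
  rw [neg_pow (c i) (k : ℕ)]
  ring

lemma wt_apply {s : ℕ} (c : Fin s → ℝ) {q : ℕ} (ζ : ℝ) (i : Fin s) (j : Fin q) :
    ((vand c q * pascal q) * tmat ζ q) i j = (ζ - c i) ^ (j : ℕ) := by
  have h := sum_pow j (-(c i + 1)) (ζ + 1)
  rw [Matrix.mul_apply]
  rw [show (ζ - c i) = -(c i + 1) + (ζ + 1) by ring, ← h]
  refine Finset.sum_congr rfl fun k _ => ?_
  rw [vp_apply]
  simp only [tmat, Matrix.of_apply]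
  rw [neg_pow (c i + 1) (k : ℕ)]
  ring

lemma mul_etil_apply {q : ℕ} (M : Matrix (Fin q) (Fin q) ℝ) (k j : Fin q) :
    (M * etil q) k j = if h : 0 < (j : ℕ) then M k ⟨(j : ℕ) - 1, by omega⟩ * (j : ℕ) else 0 := by
  rw [Matrix.mul_apply]
  split
  · rename_i hj
    rw [Finset.sum_eq_single (⟨(j : ℕ) - 1, by omega⟩ : Fin q)]
    · simp only [etil, Matrix.of_apply]
      rw [if_pos (by omega), show ((((j:ℕ)-1 : ℕ)):ℝ) + 1 = (((j:ℕ)):ℝ) by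
        rw [Nat.cast_sub (by omega)]; ring]
    · intro b _ hb
      simp only [etil, Matrix.of_apply]
      rw [if_neg, mul_zero]
      intro hc; apply hb; apply Fin.ext; simp; omega
    · intro h; exact absurd (Finset.mem_univ _) h
  · rename_i hj
    apply Finset.sum_eq_zero
    intro b _
    simp only [etil, Matrix.of_apply]
    rw [if_neg (by omega), mul_zero]

lemma etil_mul_apply {q : ℕ} (M : Matrix (Fin q) (Fin q) ℝ) (k j : Fin q) :
    (etil q * M) k j = if h : (k : ℕ) + 1 < q then ((k : ℕ) + 1 : ℝ) * M ⟨(k : ℕ) + 1, h⟩ j else 0 := by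
  rw [Matrix.mul_apply]
  split
  · rename_i hk
    rw [Finset.sum_eq_single (⟨(k : ℕ) + 1, hk⟩ : Fin q)]
    · simp only [etil, Matrix.of_apply]
      simp
    · intro b _ hb
      simp only [etil, Matrix.of_apply]
      rw [if_neg, zero_mul]
      intro hc; apply hb; apply Fin.ext; simp; omega
    · intro h; exact absurd (Finset.mem_univ _) h
  · rename_i hk
    apply Finset.sum_eq_zero
    intro b _
    simp only [etil, Matrix.of_apply]
    rw [if_neg, zero_mul]
    have := b.isLt; omega

lemma tmat_etil (ζ : ℝ) (q : ℕ) : tmat ζ q * etil q = -(etil q * tmat ζ q) := by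
  ext k j
  rw [Matrix.neg_apply, mul_etil_apply, etil_mul_apply]
  have hk := k.isLt; have hj := j.isLt
  split <;> split
  · rename_i hj1 hk1
    simp only [tmat, Matrix.of_apply]
    obtain ⟨m, hm⟩ : ∃ m, (j:ℕ) = m + 1 := ⟨(j:ℕ)-1, by omega⟩
    have hch : (j:ℕ) * (((j : ℕ) - 1).choose (k : ℕ)) = ((j:ℕ)).choose ((k:ℕ)+1) * ((k:ℕ)+1) := by
      rw [hm, show m + 1 - 1 = m from rfl]
      exact Nat.add_one_mul_choose_eq m (k:ℕ)
    have hch' : ((j:ℕ) : ℝ) * (((j : ℕ) - 1).choose (k : ℕ) : ℝ)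
        = (((j:ℕ)).choose ((k:ℕ)+1) : ℝ) * ((k:ℕ)+1 : ℝ) := by
      exact_mod_cast congrArg (Nat.cast : ℕ → ℝ) hch
    rw [show ((j:ℕ)-1) - (k:ℕ) = (j:ℕ) - ((k:ℕ)+1) by omega]
    rw [pow_succ (-1 : ℝ) (k:ℕ)]
    linear_combination ((-1:ℝ)^(k:ℕ) * (ζ+1)^((j:ℕ)-((k:ℕ)+1))) * hch'
  · rename_i hj1 hk1
    simp only [tmat, Matrix.of_apply]
    rw [Nat.choose_eq_zero_of_lt (by omega)]
    simp
  · rename_i hj1 hk1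
    simp only [tmat, Matrix.of_apply]
    rw [show (j:ℕ) = 0 by omega, Nat.choose_eq_zero_of_lt (by omega)]
    simp
  · simp

lemma alg {S Q : Type*} [Fintype S] [Fintype Q] [DecidableEq S] [DecidableEq Q]
    (V : Matrix S Q ℝ) (P E T : Matrix Q Q ℝ) (Pi : Matrix S S ℝ)
    (hPit : Piᵀ = Pi) (h1 : Pi * (V * P) = V * T) (h2 : Pi * V = V * P * T)
    (h3 : T * E = -(E * T)) (A K : Matrix S S ℝ)
    (hS : (V * P)ᵀ * A * (V * P) - Vᵀ * A * V
      = (V * P)ᵀ * K * (V * P * E) + (V * E)ᵀ * K * V) :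
    (V * P)ᵀ * (Pi * Aᵀ * Pi) * (V * P) - Vᵀ * (Pi * Aᵀ * Pi) * V
      = (V * P)ᵀ * (Pi * Kᵀ * Pi) * (V * P * E) + (V * E)ᵀ * (Pi * Kᵀ * Pi) * V := by
  have e1 : (V * P)ᵀ * (Pi * Aᵀ * Pi) * (V * P) = Tᵀ * (Vᵀ * Aᵀ * V) * T := by
    have step : (V * P)ᵀ * (Pi * Aᵀ * Pi) * (V * P) = (Pi * (V * P))ᵀ * Aᵀ * (Pi * (V * P)) := by
      conv_rhs => rw [Matrix.transpose_mul, hPit]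
      simp only [Matrix.mul_assoc]
    rw [step, h1]
    conv_lhs => rw [Matrix.transpose_mul]
    simp only [Matrix.mul_assoc]
  have e2 : Vᵀ * (Pi * Aᵀ * Pi) * V = Tᵀ * ((V * P)ᵀ * Aᵀ * (V * P)) * T := by
    have step : Vᵀ * (Pi * Aᵀ * Pi) * V = (Pi * V)ᵀ * Aᵀ * (Pi * V) := by
      conv_rhs => rw [Matrix.transpose_mul, hPit]
      simp only [Matrix.mul_assoc]
    rw [step, h2]
    conv_lhs => rw [Matrix.transpose_mul]
    simp only [Matrix.mul_assoc]
  have e3 : (V * P)ᵀ * (Pi * Kᵀ * Pi) * (V * P * E) = -(Tᵀ * (Vᵀ * Kᵀ * (V * E)) * T) := by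
    have step : (V * P)ᵀ * (Pi * Kᵀ * Pi) * (V * P * E)
        = (Pi * (V * P))ᵀ * Kᵀ * (Pi * (V * P) * E) := by
      conv_rhs => rw [Matrix.transpose_mul, hPit]
      simp only [Matrix.mul_assoc]
    rw [step, h1]
    have : V * T * E = -(V * E * T) := by
      rw [Matrix.mul_assoc, h3, Matrix.mul_neg, Matrix.mul_assoc]
    rw [this]
    conv_lhs => rw [Matrix.transpose_mul]
    simp only [Matrix.mul_neg, Matrix.neg_mul, Matrix.mul_assoc]
  have e4 : (V * E)ᵀ * (Pi * Kᵀ * Pi) * V = -(Tᵀ * ((V * P * E)ᵀ * Kᵀ * (V * P)) * T) := by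
    have step : (V * E)ᵀ * (Pi * Kᵀ * Pi) * V = (Pi * (V * E))ᵀ * Kᵀ * (Pi * V) := by
      conv_rhs => rw [Matrix.transpose_mul, hPit]
      simp only [Matrix.mul_assoc]
    have hpe : Pi * (V * E) = -(V * P * E * T) := by
      rw [← Matrix.mul_assoc, h2]
      calc V * P * T * E = V * P * (T * E) := by simp only [Matrix.mul_assoc]
        _ = -(V * P * E * T) := by rw [h3]; simp only [Matrix.mul_neg, Matrix.mul_assoc]
    rw [step, hpe, h2]
    simp only [Matrix.transpose_neg, Matrix.transpose_mul, Matrix.neg_mul, Matrix.mul_neg,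
      Matrix.transpose_transpose, Matrix.mul_assoc]
  rw [e1, e2, e3, e4]
  have H := congrArg (fun M : Matrix Q Q ℝ => Tᵀ * Mᵀ * T) hS
  simp only [Matrix.transpose_sub, Matrix.transpose_add, Matrix.transpose_mul,
    Matrix.transpose_transpose, Matrix.mul_sub, Matrix.sub_mul, Matrix.mul_add,
    Matrix.add_mul, Matrix.mul_assoc] at H
  simp only [Matrix.transpose_mul, Matrix.transpose_transpose, Matrix.mul_neg,
    Matrix.neg_mul, Matrix.mul_assoc]
  have H2 := congrArg Neg.neg H
  refine Eq.trans ?_ (H2.trans ?_) <;> abel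

lemma alg_avg {S Q : Type*} [Fintype S] [Fintype Q] [DecidableEq S] [DecidableEq Q]
    (V : Matrix S Q ℝ) (P E : Matrix Q Q ℝ) (A K B L : Matrix S S ℝ)
    (hS1 : (V * P)ᵀ * A * (V * P) - Vᵀ * A * V
      = (V * P)ᵀ * K * (V * P * E) + (V * E)ᵀ * K * V)
    (hS2 : (V * P)ᵀ * B * (V * P) - Vᵀ * B * V
      = (V * P)ᵀ * L * (V * P * E) + (V * E)ᵀ * L * V) :
    (V * P)ᵀ * ((1/2 : ℝ) • (A + B)) * (V * P) - Vᵀ * ((1/2 : ℝ) • (A + B)) * V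
      = (V * P)ᵀ * ((1/2 : ℝ) • (K + L)) * (V * P * E)
        + (V * E)ᵀ * ((1/2 : ℝ) • (K + L)) * V := by
  have H := congrArg₂ (fun X Y : Matrix Q Q ℝ => (1/2 : ℝ) • X + (1/2 : ℝ) • Y) hS1 hS2
  simp only [Matrix.mul_smul, Matrix.smul_mul, Matrix.mul_add, Matrix.add_mul, smul_add,
    smul_sub]
  refine Eq.trans ?_ (H.trans ?_)
  · simp only [Matrix.mul_smul, Matrix.smul_mul, Matrix.mul_add, Matrix.add_mul, smul_add,
      smul_sub]
    abel
  · simp only [Matrix.mul_smul, Matrix.smul_mul, Matrix.mul_add, Matrix.add_mul, smul_add,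
      smul_sub]
    abel

lemma alg_per {S : Type*} [Fintype S] [DecidableEq S]
    (Pi : Matrix S S ℝ) (hPit : Piᵀ = Pi) (hPi2 : Pi * Pi = 1) (X : Matrix S S ℝ) :
    Pi * ((1/2 : ℝ) • (X + Pi * Xᵀ * Pi))ᵀ * Pi = (1/2 : ℝ) • (X + Pi * Xᵀ * Pi) := by
  have hPi2' : ∀ M : Matrix S S ℝ, Pi * (Pi * M) = M := by
    intro M; rw [← Matrix.mul_assoc, hPi2, Matrix.one_mul]
  simp only [Matrix.transpose_smul, Matrix.transpose_add, Matrix.transpose_mul, hPit,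
    Matrix.transpose_transpose, Matrix.smul_mul, Matrix.mul_smul, Matrix.mul_add,
    Matrix.add_mul, Matrix.mul_assoc, hPi2', hPi2, Matrix.mul_one]
  rw [add_comm]

/-- for symmetric nodes (`Πc = ζ·1 - c`), if `(A,K)` satisfies the
Sylvester-type equation (S) with `q₁ = q₂ = q`, then `(Π Aᵀ Π, Π Kᵀ Π)` satisfies (S)
as well; consequently the persymmetric pair `(½(A + ΠAᵀΠ), ½(K + ΠKᵀΠ))`,
whose components `X` satisfy `ΠXᵀΠ = X`, is also a solution of (S). -/
theorem stmt12 (s q : ℕ) (c : Fin s → ℝ) (ζ : ℝ)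
    (hsym : flipPerm s *ᵥ c = fun i => ζ - c i)
    (A K : Matrix (Fin s) (Fin s) ℝ)
    (hS : SylvesterEq c q A K) :
    SylvesterEq c q (flipPerm s * Aᵀ * flipPerm s) (flipPerm s * Kᵀ * flipPerm s) ∧
      (flipPerm s * ((1/2 : ℝ) • (A + flipPerm s * Aᵀ * flipPerm s))ᵀ * flipPerm s
          = (1/2 : ℝ) • (A + flipPerm s * Aᵀ * flipPerm s)) ∧
      (flipPerm s * ((1/2 : ℝ) • (K + flipPerm s * Kᵀ * flipPerm s))ᵀ * flipPerm s
          = (1/2 : ℝ) • (K + flipPerm s * Kᵀ * flipPerm s)) ∧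
      SylvesterEq c q ((1/2 : ℝ) • (A + flipPerm s * Aᵀ * flipPerm s))
        ((1/2 : ℝ) • (K + flipPerm s * Kᵀ * flipPerm s)) := by
  have hcrev : ∀ i : Fin s, c i.rev = ζ - c i := by
    intro i
    have := congrFun hsym i
    rw [flip_mulVec] at this
    exact this
  have h1 : flipPerm s * (vand c q * pascal q) = vand c q * tmat ζ q := by
    ext i j
    rw [flip_mul_apply, vp_apply, vt_apply, hcrev i]
    ring_nf
  have h2 : flipPerm s * vand c q = vand c q * pascal q * tmat ζ q := by
    ext i j
    rw [flip_mul_apply, wt_apply]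
    show c i.rev ^ (j : ℕ) = _
    rw [hcrev i]
  have hmain : SylvesterEq c q (flipPerm s * Aᵀ * flipPerm s) (flipPerm s * Kᵀ * flipPerm s) :=
    alg (vand c q) (pascal q) (etil q) (tmat ζ q) (flipPerm s)
      (flip_transpose s) h1 h2 (tmat_etil ζ q) A K hS
  exact ⟨hmain, alg_per (flipPerm s) (flip_transpose s) (flip_flip' s) A,
    alg_per (flipPerm s) (flip_transpose s) (flip_flip' s) K,
    alg_avg (vand c q) (pascal q) (etil q) A K _ _ hS hmain⟩
end

section
/- For every q ∈ ℕ and every matrix M ∈ ℝ^{q×q}, there exists a matrix W ∈ ℝ^{q×q} solving the equation 𝒫_qᵀ W 𝒫_q − W = 𝒫_qᵀ M 𝒫_q Ẽ_q + Ẽ_qᵀ M. -/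
open Matrix

lemma etil_apply (q : ℕ) (i j : Fin q) :
    etil q i j = if (j : ℕ) = (i : ℕ) + 1 then ((i : ℕ) + 1 : ℝ) else 0 := rfl

lemma etil_pow_apply (q k : ℕ) (i j : Fin q) :
    (etil q ^ k) i j
      = if (j : ℕ) = (i : ℕ) + k then (((i : ℕ) + 1).ascFactorial k : ℝ) else 0 := by
  induction k generalizing j with
  | zero =>
    simp [Matrix.one_apply, Fin.ext_iff, eq_comm]
  | succ k ih =>
    rw [pow_succ, Matrix.mul_apply]
    by_cases h : (j : ℕ) = (i : ℕ) + (k + 1)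
    · have hik : (i : ℕ) + k < q := by omega
      rw [Finset.sum_eq_single ⟨(i : ℕ) + k, hik⟩]
      · have h1 : (etil q ^ k) i ⟨(i : ℕ) + k, hik⟩
            = (((i : ℕ) + 1).ascFactorial k : ℝ) := by rw [ih]; simp
        have h2 : etil q ⟨(i : ℕ) + k, hik⟩ j = ((i : ℕ) + k + 1 : ℝ) := by
          rw [etil_apply, if_pos (by show (j:ℕ) = (i:ℕ) + k + 1; omega)]; push_cast; ring
        rw [h1, h2, if_pos h, Nat.ascFactorial_succ]
        push_cast; ring
      · intro b _ hb
        rw [ih, if_neg (fun hc => hb (Fin.ext (by simpa using hc))), zero_mul]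
      · intro hmem; exact absurd (Finset.mem_univ _) hmem
    · rw [if_neg h]
      apply Finset.sum_eq_zero
      intro m _
      rw [ih]
      by_cases hm : (m : ℕ) = (i : ℕ) + k
      · have : etil q m j = 0 := by rw [etil_apply, if_neg (by omega)]
        rw [this, mul_zero]
      · rw [if_neg hm, zero_mul]

lemma etil_pow_q (q : ℕ) : etil q ^ q = 0 := by
  ext i j
  rw [etil_pow_apply, if_neg (by omega)]
  rfl

lemma pascal_eq_sum (q n : ℕ) (hn : q ≤ n) :
    pascal q = ∑ k ∈ Finset.range n, ((k.factorial : ℝ))⁻¹ • etil q ^ k := by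
  ext i j
  rw [Matrix.sum_apply]
  simp only [Matrix.smul_apply, etil_pow_apply, smul_eq_mul, pascal, Matrix.of_apply]
  by_cases h : (i : ℕ) ≤ (j : ℕ)
  · rw [Finset.sum_eq_single ((j : ℕ) - (i : ℕ))]
    · rw [if_pos (by omega)]
      have hasc : ((i : ℕ) + 1).ascFactorial ((j : ℕ) - (i : ℕ))
          = ((j : ℕ) - (i : ℕ)).factorial * ((j : ℕ).choose ((j : ℕ) - (i : ℕ))) := by
        have := Nat.ascFactorial_eq_factorial_mul_choose (i : ℕ) ((j : ℕ) - (i : ℕ))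
        rwa [show (i : ℕ) + ((j : ℕ) - (i : ℕ)) = (j : ℕ) by omega] at this
      rw [hasc, Nat.choose_symm h]
      push_cast
      rw [inv_mul_cancel_left₀ (Nat.cast_ne_zero.2 (Nat.factorial_ne_zero _))]
    · intro b _ hb
      rw [if_neg (by omega), mul_zero]
    · intro hmem
      exact absurd (Finset.mem_range.2 (by omega)) hmem
  · rw [Nat.choose_eq_zero_of_lt (by omega), Nat.cast_zero]
    symm
    apply Finset.sum_eq_zero
    intro k _
    rw [if_neg (by omega), mul_zero]

open Finset in
lemma exp_sum_mul {S : Type*} [Ring S] [Algebra ℝ S] {x y : S} (q : ℕ)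
    (hxy : Commute x y) (hx : x ^ q = 0) (hy : y ^ q = 0) :
    (∑ a ∈ range (2*q+1), ((a.factorial : ℝ))⁻¹ • x ^ a) *
    (∑ b ∈ range (2*q+1), ((b.factorial : ℝ))⁻¹ • y ^ b)
      = ∑ k ∈ range (2*q+1), ((k.factorial : ℝ))⁻¹ • (x + y) ^ k := by
  set n := 2*q+1 with hn
  set g : ℕ × ℕ → S := fun p =>
    ((p.1.factorial : ℝ)⁻¹ * (p.2.factorial : ℝ)⁻¹) • (x ^ p.1 * y ^ p.2) with hg
  have hzero : ∀ p : ℕ × ℕ, q ≤ p.1 ∨ q ≤ p.2 → g p = 0 := by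
    rintro ⟨a, b⟩ (h | h)
    · have : x ^ a = 0 := by
        rw [show a = q + (a - q) by omega, pow_add, hx, zero_mul]
      simp [hg, this]
    · have : y ^ b = 0 := by
        rw [show b = q + (b - q) by omega, pow_add, hy, zero_mul]
      simp [hg, this]
  have lhs_eq : (∑ a ∈ range n, ((a.factorial : ℝ))⁻¹ • x ^ a) *
      (∑ b ∈ range n, ((b.factorial : ℝ))⁻¹ • y ^ b)
      = ∑ p ∈ range n ×ˢ range n, g p := by
    rw [Finset.sum_mul_sum, Finset.sum_product]
    congr 1; ext a; congr 1; ext b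
    rw [smul_mul_smul_comm]
  have rhs_eq : ∑ k ∈ range n, ((k.factorial : ℝ))⁻¹ • (x + y) ^ k
      = ∑ k ∈ range n, ∑ p ∈ Finset.HasAntidiagonal.antidiagonal k, g p := by
    refine Finset.sum_congr rfl fun k _ => ?_
    rw [Finset.Nat.sum_antidiagonal_eq_sum_range_succ_mk, hxy.add_pow, Finset.smul_sum]
    refine Finset.sum_congr rfl fun j hj => ?_
    have hjk : j ≤ k := by simpa using Nat.lt_succ_iff.mp (Finset.mem_range.mp hj)
    have hcast : ((k.choose j : ℕ) : ℝ) * (j.factorial : ℝ) * ((k-j).factorial : ℝ)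
        = (k.factorial : ℝ) := by
      exact_mod_cast congrArg (Nat.cast (R := ℝ)) (Nat.choose_mul_factorial_mul_factorial hjk)
    have : x ^ j * y ^ (k - j) * (k.choose j : S)
        = ((k.choose j : ℕ) : ℝ) • (x ^ j * y ^ (k - j)) := by
      rw [Nat.cast_smul_eq_nsmul, nsmul_eq_mul]
      exact ((Nat.cast_commute (k.choose j) (x ^ j * y ^ (k - j))).eq).symm
    rw [this, smul_smul, hg]
    congr 1
    have h1 : (j.factorial : ℝ) ≠ 0 := Nat.cast_ne_zero.2 (Nat.factorial_ne_zero _)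
    have h2 : ((k - j).factorial : ℝ) ≠ 0 := Nat.cast_ne_zero.2 (Nat.factorial_ne_zero _)
    have h3 : (k.factorial : ℝ) ≠ 0 := Nat.cast_ne_zero.2 (Nat.factorial_ne_zero _)
    field_simp
    linear_combination hcast
  rw [lhs_eq, rhs_eq]
  have hdisj : ((range n : Finset ℕ) : Set ℕ).PairwiseDisjoint Finset.HasAntidiagonal.antidiagonal := by
    intro a _ b _ hab
    simp only [Finset.disjoint_left]
    intro p hpa hpb
    exact hab ((Finset.HasAntidiagonal.mem_antidiagonal.mp hpa).symm.trans
      (Finset.HasAntidiagonal.mem_antidiagonal.mp hpb))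
  rw [← Finset.sum_biUnion hdisj]
  refine (Finset.sum_subset ?_ ?_).symm
  · intro p hp
    obtain ⟨k, hk, hpk⟩ := Finset.mem_biUnion.mp hp
    have := Finset.HasAntidiagonal.mem_antidiagonal.mp hpk
    have hkn := Finset.mem_range.mp hk
    exact Finset.mem_product.mpr ⟨Finset.mem_range.mpr (by omega),
      Finset.mem_range.mpr (by omega)⟩
  · intro p hp hnp
    apply hzero
    by_contra hc
    push_neg at hc
    exact hnp (Finset.mem_biUnion.mpr ⟨p.1 + p.2, Finset.mem_range.mpr (by omega),
      Finset.HasAntidiagonal.mem_antidiagonal.mpr rfl⟩)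

/-- for every `q` and every `M ∈ ℝ^{q×q}` the equation
`𝒫_qᵀ W 𝒫_q - W = 𝒫_qᵀ M 𝒫_q Ẽ_q + Ẽ_qᵀ M` has a solution `W ∈ ℝ^{q×q}`. -/
theorem stmt13 (q : ℕ) (M : Matrix (Fin q) (Fin q) ℝ) :
    ∃ W : Matrix (Fin q) (Fin q) ℝ,
      (pascal q)ᵀ * W * pascal q - W
        = (pascal q)ᵀ * M * pascal q * etil q + (etil q)ᵀ * M := by
  rcases Nat.eq_zero_or_pos q with hq0 | hq0
  · subst hq0
    exact ⟨0, by ext i j; exact i.elim0⟩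
  set E := etil q with hE
  set P := pascal q with hPdef
  set l : Module.End ℝ (Matrix (Fin q) (Fin q) ℝ) := LinearMap.mulLeft ℝ Eᵀ with hldef
  set r : Module.End ℝ (Matrix (Fin q) (Fin q) ℝ) := LinearMap.mulRight ℝ E with hrdef
  have hcomm : Commute l r := LinearMap.commute_mulLeft_right _ _
  have hl : l ^ q = 0 := by
    rw [hldef, LinearMap.pow_mulLeft, ← Matrix.transpose_pow, hE, etil_pow_q,
      Matrix.transpose_zero, LinearMap.mulLeft_zero_eq_zero]
  have hr : r ^ q = 0 := by
    rw [hrdef, LinearMap.pow_mulRight, hE, etil_pow_q, LinearMap.mulRight_zero_eq_zero]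
  set Λ : Module.End ℝ (Matrix (Fin q) (Fin q) ℝ) := l + r with hΛdef
  set es : Module.End ℝ (Matrix (Fin q) (Fin q) ℝ) :=
    ∑ k ∈ Finset.range (2*q+1), ((k.factorial : ℝ))⁻¹ • Λ ^ k with hesdef
  have hP : P = ∑ k ∈ Finset.range (2*q+1), ((k.factorial : ℝ))⁻¹ • E ^ k :=
    pascal_eq_sum q (2*q+1) (by omega)
  have hPT : Pᵀ = ∑ k ∈ Finset.range (2*q+1), ((k.factorial : ℝ))⁻¹ • (Eᵀ) ^ k := by
    rw [hP, Matrix.transpose_sum]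
    exact Finset.sum_congr rfl fun k _ => by rw [Matrix.transpose_smul, Matrix.transpose_pow]
  have hL : LinearMap.mulLeft ℝ Pᵀ
      = ∑ k ∈ Finset.range (2*q+1), ((k.factorial : ℝ))⁻¹ • l ^ k := by
    apply LinearMap.ext; intro W
    simp only [LinearMap.mulLeft_apply, hPT, LinearMap.sum_apply, LinearMap.smul_apply,
      hldef, LinearMap.pow_mulLeft, Finset.sum_mul, smul_mul_assoc]
  have hR : LinearMap.mulRight ℝ P
      = ∑ k ∈ Finset.range (2*q+1), ((k.factorial : ℝ))⁻¹ • r ^ k := by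
    apply LinearMap.ext; intro W
    simp only [LinearMap.mulRight_apply, hP, LinearMap.sum_apply, LinearMap.smul_apply,
      hrdef, LinearMap.pow_mulRight, Finset.mul_sum, mul_smul_comm]
  have hΦ : LinearMap.mulLeft ℝ Pᵀ * LinearMap.mulRight ℝ P = es := by
    rw [hL, hR, hesdef, hΛdef]
    exact exp_sum_mul q hcomm hl hr
  set c : Module.End ℝ (Matrix (Fin q) (Fin q) ℝ) :=
    ∑ k ∈ Finset.range (2*q), (((k+1).factorial : ℝ))⁻¹ • Λ ^ k with hcdef
  have hfact : es = 1 + Λ * c := by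
    rw [hesdef, Finset.sum_range_succ', add_comm]
    congr 1
    · norm_num
    · rw [hcdef, Finset.mul_sum]
      exact Finset.sum_congr rfl fun k _ => by rw [mul_smul_comm, ← pow_succ']
  have hΛnil : IsNilpotent Λ := hcomm.isNilpotent_add ⟨q, hl⟩ ⟨q, hr⟩
  set d : Module.End ℝ (Matrix (Fin q) (Fin q) ℝ) :=
    ∑ k ∈ Finset.range (2*q-1), (((k+1+1).factorial : ℝ))⁻¹ • Λ ^ k with hddef
  have hcd : c = 1 + Λ * d := by
    rw [hcdef, show 2*q = (2*q-1)+1 by omega, Finset.sum_range_succ', add_comm]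
    congr 1
    · norm_num
    · rw [hddef, Finset.mul_sum]
      exact Finset.sum_congr rfl fun k _ => by rw [mul_smul_comm, ← pow_succ']
  have hΛd : Commute Λ d := by
    rw [hddef]
    exact Commute.sum_right _ _ _ fun k _ => ((Commute.refl Λ).pow_right k).smul_right _
  have hcu : IsUnit c := by
    rw [hcd]
    exact (hΛd.isNilpotent_mul_right hΛnil).isUnit_one_add
  set ci : Module.End ℝ (Matrix (Fin q) (Fin q) ℝ) := ↑hcu.unit⁻¹ with hcidef
  have hcci : c * ci = 1 := hcu.mul_val_inv
  have hrΛ : Commute r Λ := hcomm.symm.add_right (Commute.refl r)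
  have hrc : Commute r c := by
    rw [hcdef]
    exact Commute.sum_right _ _ _ fun k _ => (hrΛ.pow_right k).smul_right _
  have hkey : (es - 1) * (r + ci) = r * es + l := by
    have h1 : es - 1 = Λ * c := by rw [hfact, add_sub_cancel_left]
    have h2 : Λ * c * ci = Λ := by rw [mul_assoc, hcci, mul_one]
    have h3 : Λ * c * r = r * (Λ * c) := by
      rw [mul_assoc, ← hrc.eq, ← mul_assoc, ← hrΛ.eq, mul_assoc]
    rw [h1, mul_add, h2, h3, ← h1]
    rw [hΛdef]
    rw [mul_sub, mul_one]
    abel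
  set W : Matrix (Fin q) (Fin q) ℝ := (r + ci) M with hW
  refine ⟨W, ?_⟩
  have happ := LinearMap.congr_fun hkey M
  rw [← hΦ] at happ
  simp only [Module.End.mul_apply, LinearMap.sub_apply, Module.End.one_apply,
    LinearMap.add_apply, ← hW, hldef, hrdef, LinearMap.mulLeft_apply,
    LinearMap.mulRight_apply] at happ
  rw [mul_assoc Pᵀ W P, mul_assoc Pᵀ M P]
  exact happ
end

section
/- Let q ∈ ℕ and let U ∈ ℝ^{q×q} satisfy 𝒫_q U 𝒫_qᵀ = U and Ẽ_q U + U Ẽ_qᵀ = 0. Then for every M ∈ ℝ^{q×q} the trace orthogonality tr(Uᵀ(𝒫_qᵀ M 𝒫_q Ẽ_q + Ẽ_qᵀ M)) = 0 holds. -/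
open Matrix

lemma pascal_etil_comm (q : ℕ) : pascal q * etil q = etil q * pascal q := by
  ext i j
  simp only [mul_apply, pascal, etil, of_apply, mul_ite, ite_mul, mul_zero, zero_mul]
  by_cases hj : (j : ℕ) = 0
  · have hL : ∀ k : Fin q, (if (j : ℕ) = (k : ℕ) + 1 then
        ((k : ℕ).choose (i : ℕ) : ℝ) * ((k : ℕ) + 1) else 0) = 0 := by
      intro k; rw [if_neg]; omega
    simp only [hL, Finset.sum_const_zero]
    by_cases hi : (i : ℕ) + 1 < q
    · have hR : ∀ k : Fin q, (if (k : ℕ) = (i : ℕ) + 1 then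
          ((i : ℕ) + 1 : ℝ) * ((j : ℕ).choose (k : ℕ) : ℝ) else 0)
          = if k = (⟨(i : ℕ) + 1, hi⟩ : Fin q) then
            ((i : ℕ) + 1 : ℝ) * ((j : ℕ).choose ((i : ℕ) + 1) : ℝ) else 0 := by
        intro k
        by_cases h : (k : ℕ) = (i : ℕ) + 1
        · rw [if_pos h, if_pos (by exact Fin.ext h), h]
        · rw [if_neg h, if_neg (by intro hk; exact h (by rw [hk]))]
      rw [Finset.sum_congr rfl fun k _ => hR k, Finset.sum_ite_eq' _ _ _]
      simp [hj, Nat.choose_eq_zero_of_lt]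
    · have hR : ∀ k : Fin q, (if (k : ℕ) = (i : ℕ) + 1 then
          ((i : ℕ) + 1 : ℝ) * ((j : ℕ).choose (k : ℕ) : ℝ) else 0) = 0 := by
        intro k; rw [if_neg]; have := k.isLt; omega
      simp [hR]
  · -- j ≠ 0
    have hjq : (j : ℕ) - 1 < q := by have := j.isLt; omega
    have hL : ∀ k : Fin q, (if (j : ℕ) = (k : ℕ) + 1 then
        ((k : ℕ).choose (i : ℕ) : ℝ) * ((k : ℕ) + 1) else 0)
        = if k = (⟨(j : ℕ) - 1, hjq⟩ : Fin q) then
          (((j : ℕ) - 1).choose (i : ℕ) : ℝ) * ((j : ℕ) : ℝ) else 0 := by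
      intro k
      by_cases h : (j : ℕ) = (k : ℕ) + 1
      · rw [if_pos h, if_pos (Fin.ext (by simp only [Fin.val_mk]; omega))]
        have : (k : ℕ) = (j : ℕ) - 1 := by omega
        rw [this]
        congr 1
        ring_nf
        rw [Nat.cast_sub (by omega : 1 ≤ (j : ℕ))]
        ring
      · rw [if_neg h, if_neg (by
          intro hk; apply h
          have hv : (k : ℕ) = (j : ℕ) - 1 := by simpa using congrArg Fin.val hk
          omega)]
    rw [Finset.sum_congr rfl fun k _ => hL k, Finset.sum_ite_eq' _ _ _]
    simp only [Finset.mem_univ, if_true]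
    by_cases hi : (i : ℕ) + 1 < q
    · have hR : ∀ k : Fin q, (if (k : ℕ) = (i : ℕ) + 1 then
          ((i : ℕ) + 1 : ℝ) * ((j : ℕ).choose (k : ℕ) : ℝ) else 0)
          = if k = (⟨(i : ℕ) + 1, hi⟩ : Fin q) then
            ((i : ℕ) + 1 : ℝ) * ((j : ℕ).choose ((i : ℕ) + 1) : ℝ) else 0 := by
        intro k
        by_cases h : (k : ℕ) = (i : ℕ) + 1
        · rw [if_pos h, if_pos (Fin.ext h), h]
        · rw [if_neg h, if_neg (by intro hk; exact h (by rw [hk]))]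
      rw [Finset.sum_congr rfl fun k _ => hR k, Finset.sum_ite_eq' _ _ _]
      simp only [Finset.mem_univ, if_true]
      have key : (j : ℕ) * ((j : ℕ) - 1).choose (i : ℕ)
          = ((i : ℕ) + 1) * ((j : ℕ).choose ((i : ℕ) + 1)) := by
        have := Nat.add_one_mul_choose_eq ((j : ℕ) - 1) (i : ℕ)
        rw [Nat.sub_add_cancel (by omega : 1 ≤ (j : ℕ))] at this
        rw [this]; exact Nat.mul_comm _ _
      have := congrArg (fun n : ℕ => (n : ℝ)) key
      push_cast at this
      linarith
    · -- i + 1 ≥ q, so i = q - 1 and choose (j-1) i = 0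
      have hR : ∀ k : Fin q, (if (k : ℕ) = (i : ℕ) + 1 then
          ((i : ℕ) + 1 : ℝ) * ((j : ℕ).choose (k : ℕ) : ℝ) else 0) = 0 := by
        intro k; rw [if_neg]; have := k.isLt; omega
      simp only [hR, Finset.sum_const_zero]
      have : ((j : ℕ) - 1).choose (i : ℕ) = 0 :=
        Nat.choose_eq_zero_of_lt (by have := j.isLt; omega)
      rw [this]
      simp

/-- if `U` satisfies `𝒫_q U 𝒫_qᵀ = U` and `Ẽ_q U + U Ẽ_qᵀ = 0`, then
for every `M`, `tr(Uᵀ(𝒫_qᵀ M 𝒫_q Ẽ_q + Ẽ_qᵀ M)) = 0`. -/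
theorem stmt14 (q : ℕ) (U : Matrix (Fin q) (Fin q) ℝ)
    (hU₁ : pascal q * U * (pascal q)ᵀ = U)
    (hU₂ : etil q * U + U * (etil q)ᵀ = 0) :
    ∀ M : Matrix (Fin q) (Fin q) ℝ,
      Matrix.trace (Uᵀ * ((pascal q)ᵀ * M * pascal q * etil q + (etil q)ᵀ * M)) = 0 := by
  intro M
  set P := pascal q
  set E := etil q
  have hU₁' : P * Uᵀ * Pᵀ = Uᵀ := by
    have := congrArg Matrix.transpose hU₁
    simpa [Matrix.transpose_mul, Matrix.mul_assoc] using this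
  have hU₂' : E * Uᵀ = -(Uᵀ * Eᵀ) := by
    have := congrArg Matrix.transpose hU₂
    simp only [Matrix.transpose_add, Matrix.transpose_mul, Matrix.transpose_transpose,
      Matrix.transpose_zero] at this
    linear_combination (norm := (ext i j; simp)) this
  have hcomm : P * E = E * P := pascal_etil_comm q
  have h1 : Uᵀ * (Pᵀ * M * P * E) = (Uᵀ * Pᵀ) * (M * (P * E)) := by
    simp only [Matrix.mul_assoc]
  have h2 : trace (Uᵀ * (Pᵀ * M * P * E)) = trace (M * (E * Uᵀ)) := by
    rw [h1, Matrix.trace_mul_comm]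
    congr 1
    calc M * (P * E) * (Uᵀ * Pᵀ) = M * (E * (P * Uᵀ * Pᵀ)) := by
          simp only [Matrix.mul_assoc, hcomm]
      _ = M * (E * Uᵀ) := by rw [hU₁']
  have h3 : trace (Uᵀ * (Eᵀ * M)) = trace (M * -(E * Uᵀ)) := by
    have h4 : Uᵀ * Eᵀ = -(E * Uᵀ) := by rw [hU₂', neg_neg]
    rw [← Matrix.mul_assoc, Matrix.trace_mul_comm, h4]
  rw [Matrix.mul_add, Matrix.trace_add, h2, h3]
  simp [Matrix.mul_neg]
end

section
/- A matrix X ∈ ℝ^{3×3} satisfies X Ẽ_3 + Ẽ_3ᵀ X = 0 if and only if there exist ξ_1, ξ_2, ξ_3 ∈ ℝ such that X = [[0, 0, 2ξ_1], [0, −ξ_1, ξ_2], [2ξ_1, −ξ_2, ξ_3]]. In particular, the kernel of the linear map X ↦ X Ẽ_3 + Ẽ_3ᵀ X on ℝ^{3×3} is three-dimensional. -/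
open Matrix

/-- The nilpotent matrix `Ẽ_3 ∈ ℝ^{3×3}` with only nonzero entries
`(Ẽ_3)_{12} = 1` and `(Ẽ_3)_{23} = 2`. -/
noncomputable def etil3 : Matrix (Fin 3) (Fin 3) ℝ := !![0, 1, 0; 0, 0, 2; 0, 0, 0]

/-- The linear map `X ↦ X Ẽ_3 + Ẽ_3ᵀ X` on `ℝ^{3×3}`. -/
noncomputable def sylvMap : Matrix (Fin 3) (Fin 3) ℝ →ₗ[ℝ] Matrix (Fin 3) (Fin 3) ℝ where
  toFun X := X * etil3 + etil3ᵀ * X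
  map_add' X Y := by simp only [add_mul, mul_add]; abel
  map_smul' c X := by simp [smul_mul_assoc, mul_smul_comm]


lemma etr : etil3ᵀ = !![0, 0, 0; 1, 0, 0; 0, 2, 0] := by
  ext i j
  fin_cases i <;> fin_cases j <;> simp [etil3, Matrix.vecHead, Matrix.vecTail]

lemma key (X : Matrix (Fin 3) (Fin 3) ℝ) :
    X * etil3 + etil3ᵀ * X = 0 ↔
      ∃ ξ₁ ξ₂ ξ₃ : ℝ, X = !![0, 0, 2 * ξ₁; 0, -ξ₁, ξ₂; 2 * ξ₁, -ξ₂, ξ₃] := by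
  rw [etr, show etil3 = !![(0:ℝ), 1, 0; 0, 0, 2; 0, 0, 0] from rfl]
  constructor
  · intro h
    refine ⟨X 2 0 / 2, X 1 2, X 2 2, ?_⟩
    have h' : ∀ i j, (X * !![(0:ℝ), 1, 0; 0, 0, 2; 0, 0, 0] + !![(0:ℝ), 0, 0; 1, 0, 0; 0, 2, 0] * X) i j = 0 := by
      intro i j; rw [h]; rfl
    have h00 := h' 0 0; have h01 := h' 0 1; have h02 := h' 0 2
    have h10 := h' 1 0; have h11 := h' 1 1; have h12 := h' 1 2
    have h20 := h' 2 0; have h21 := h' 2 1; have h22 := h' 2 2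
    simp [Matrix.mul_apply, Matrix.vecMul, dotProduct, Fin.sum_univ_three, Matrix.vecHead, Matrix.vecTail]
      at h00 h01 h02 h10 h11 h12 h20 h21 h22
    ext i j
    fin_cases i <;> fin_cases j <;>
      simp [Matrix.vecHead, Matrix.vecTail] <;> linarith
  · rintro ⟨a, b, c, rfl⟩
    ext i j
    fin_cases i <;> fin_cases j <;>
      simp [Matrix.mul_apply, Matrix.vecMul, dotProduct, Fin.sum_univ_three, Matrix.vecHead, Matrix.vecTail] <;> ring

noncomputable def fmap : (Fin 3 → ℝ) →ₗ[ℝ] Matrix (Fin 3) (Fin 3) ℝ where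
  toFun v := !![0, 0, 2 * v 0; 0, -v 0, v 1; 2 * v 0, -v 1, v 2]
  map_add' u v := by
    ext i j
    fin_cases i <;> fin_cases j <;> simp [Matrix.vecHead, Matrix.vecTail] <;> ring
  map_smul' c v := by
    ext i j
    fin_cases i <;> fin_cases j <;> simp [Matrix.vecHead, Matrix.vecTail] <;> ring

/-- `X Ẽ_3 + Ẽ_3ᵀ X = 0` iff `X` has the form
`[[0, 0, 2ξ₁], [0, -ξ₁, ξ₂], [2ξ₁, -ξ₂, ξ₃]]`; in particular the kernel of
`X ↦ X Ẽ_3 + Ẽ_3ᵀ X` is three-dimensional. -/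
theorem stmt15 :
    (∀ X : Matrix (Fin 3) (Fin 3) ℝ,
        X * etil3 + etil3ᵀ * X = 0 ↔
          ∃ ξ₁ ξ₂ ξ₃ : ℝ, X = !![0, 0, 2 * ξ₁; 0, -ξ₁, ξ₂; 2 * ξ₁, -ξ₂, ξ₃]) ∧
      Module.finrank ℝ (LinearMap.ker sylvMap) = 3 := by
  refine ⟨key, ?_⟩
  have hker : LinearMap.ker sylvMap = LinearMap.range fmap := by
    ext X
    simp only [LinearMap.mem_ker, LinearMap.mem_range]
    show X * etil3 + etil3ᵀ * X = 0 ↔ _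
    rw [key]
    constructor
    · rintro ⟨a, b, c, rfl⟩
      exact ⟨![a, b, c], by simp [fmap]⟩
    · rintro ⟨v, rfl⟩; exact ⟨v 0, v 1, v 2, rfl⟩
  rw [hker]
  have hinj : Function.Injective fmap := by
    intro u v h
    have e := fun i j => congrFun (congrFun h i) j
    have e0 := e 0 2; have e1 := e 1 2; have e2 := e 2 2
    simp [fmap, Matrix.vecHead, Matrix.vecTail] at e0 e1 e2
    funext i
    fin_cases i
    · show u 0 = v 0; linarith
    · show u 1 = v 1; linarith
    · show u 2 = v 2; linarith
  rw [LinearMap.finrank_range_of_inj hinj]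
  simp
end

section
/- Let s = 3 and let the nodes be c = (c_2 − d_1, c_2, c_2 + d_3) with d_1 ≠ 0, d_3 ≠ 0 and d_1 + d_3 ≠ 0 (so the nodes are pairwise distinct). Consider the linear map X ↦ 𝒫_3ᵀ (V_3ᵀ X V_3) 𝒫_3 − V_3ᵀ X V_3 on ℝ^{3×3}. There exists a nonzero lower triangular matrix X in the kernel of this map if and only if d_1 = d_3; and in the case d_1 = d_3 the lower triangular kernel elements are exactly the real scalar multiples of the matrix [[1,0,0],[−3,1,0],[3,−3,1]]. -/
open Matrix

set_option maxHeartbeats 1000000 in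
/-- for `s = 3` and nodes `c = (c₂-d₁, c₂, c₂+d₃)` with
`d₁, d₃, d₁+d₃ ≠ 0`, the linear map `X ↦ 𝒫₃ᵀ(V₃ᵀ X V₃)𝒫₃ - V₃ᵀ X V₃` has a
nonzero lower triangular kernel element iff `d₁ = d₃`, in which case the lower
triangular kernel elements are exactly the scalar multiples of
`[[1,0,0],[-3,1,0],[3,-3,1]]`. -/
theorem stmt16 (c₂ d₁ d₃ : ℝ) (hd₁ : d₁ ≠ 0) (hd₃ : d₃ ≠ 0) (hd : d₁ + d₃ ≠ 0) :
    ((∃ X : Matrix (Fin 3) (Fin 3) ℝ, X ≠ 0 ∧ (∀ i j : Fin 3, i < j → X i j = 0) ∧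
        (pascal 3)ᵀ * ((vand ![c₂ - d₁, c₂, c₂ + d₃] 3)ᵀ * X * vand ![c₂ - d₁, c₂, c₂ + d₃] 3)
            * pascal 3
          - (vand ![c₂ - d₁, c₂, c₂ + d₃] 3)ᵀ * X * vand ![c₂ - d₁, c₂, c₂ + d₃] 3 = 0) ↔
      d₁ = d₃) ∧
    (d₁ = d₃ →
      ∀ X : Matrix (Fin 3) (Fin 3) ℝ,
        ((∀ i j : Fin 3, i < j → X i j = 0) ∧
          (pascal 3)ᵀ * ((vand ![c₂ - d₁, c₂, c₂ + d₃] 3)ᵀ * X * vand ![c₂ - d₁, c₂, c₂ + d₃] 3)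
              * pascal 3
            - (vand ![c₂ - d₁, c₂, c₂ + d₃] 3)ᵀ * X * vand ![c₂ - d₁, c₂, c₂ + d₃] 3 = 0) ↔
          ∃ t : ℝ, X = t • !![(1:ℝ), 0, 0; -3, 1, 0; 3, -3, 1]) := by
  -- main extraction: the consequences of the kernel equation for triangular X
  have main : ∀ X : Matrix (Fin 3) (Fin 3) ℝ, (∀ i j : Fin 3, i < j → X i j = 0) →
      (pascal 3)ᵀ * ((vand ![c₂ - d₁, c₂, c₂ + d₃] 3)ᵀ * X * vand ![c₂ - d₁, c₂, c₂ + d₃] 3)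
            * pascal 3
          - (vand ![c₂ - d₁, c₂, c₂ + d₃] 3)ᵀ * X * vand ![c₂ - d₁, c₂, c₂ + d₃] 3 = 0 →
      (X 1 0 + X 2 0 = 0) ∧ (3*(d₁+d₃)*X 0 0 - 2*d₃*X 2 0 = 0) ∧
      (d₃*X 2 2 - d₁*(X 0 0 + X 1 0 + X 2 0) = 0) ∧
      (d₃*(X 2 0 + X 2 1 + X 2 2) - d₁*X 0 0 = 0) ∧
      (X 0 0 + X 1 0 + X 1 1 + X 2 0 + X 2 1 + X 2 2 = 0) ∧
      (d₁*(d₃+d₁)*(d₃-d₁)*X 0 0 = 0) := by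
    intro X ht hM
    have z01 : X 0 1 = 0 := ht 0 1 (by decide)
    have z02 : X 0 2 = 0 := ht 0 2 (by decide)
    have z12 : X 1 2 = 0 := ht 1 2 (by decide)
    have h01 := congrFun (congrFun hM 0) 1
    have h02 := congrFun (congrFun hM 0) 2
    have h11 := congrFun (congrFun hM 1) 1
    have h20 := congrFun (congrFun hM 2) 0
    have h12 := congrFun (congrFun hM 1) 2
    have h21 := congrFun (congrFun hM 2) 1
    have h22 := congrFun (congrFun hM 2) 2
    simp [vand, pascal, Matrix.mul_apply, Fin.sum_univ_three] at h01 h02 h11 h20 h12 h21 h22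
    rw [z01, z02, z12] at h01 h02 h11 h20 h12 h21 h22
    set a := X 0 0
    set b := X 1 0
    set c := X 1 1
    set d := X 2 0
    set e := X 2 1
    set f := X 2 2
    have hS : a + b + c + d + e + f = 0 := by linear_combination h01
    have hA2 : d₃*f - d₁*(a+b+d) = 0 := by
      linear_combination h02/2 - (1/2 + c₂)*h01
    have hA3 : d₃*(d+e+f) - d₁*a = 0 := by
      linear_combination h20/2 - (1/2 + c₂)*h01
    have g5 : 3*d₃*f + d₃*(d+e) + 3*d₃^2*f - d₁*(3*a+2*b+2*d) - 2*d₁*d₃*d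
        + d₁^2*(3*a+b+d) = 0 := by
      linear_combination h12 - c₂*h02 - 2*c₂*h11 + 3*c₂^2*h01 - h01
    have g6 : 3*d₃*f + 2*d₃*(d+e) + 3*d₃^2*f + d₃^2*(d+e) - d₁*(3*a+b+d) - 2*d₁*d₃*d
        + 3*d₁^2*a = 0 := by
      linear_combination h21 - c₂*h20 - 2*c₂*h11 + 3*c₂^2*h01 - h01
    have g7 : 4*d₃*f + 2*d₃*(d+e) + 6*d₃^2*f + d₃^2*(d+e) + 4*d₃^3*f - d₁*(4*a+2*b+2*d)
        - 4*d₁*d₃*d - 2*d₁*d₃^2*d + d₁^2*(6*a+b+d) + 2*d₁^2*d₃*d - 4*d₁^3*a = 0 := by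
      linear_combination h22 - 2*c₂*h12 - 2*c₂*h21 + c₂^2*h02 + c₂^2*h20 + 4*c₂^2*h11
        - 4*c₂^3*h01 - h01
    have hI : d₁*d₃*(3*(d₁+d₃)*a + (d₁+3*d₃)*(b+d) - 2*d₃*d) = 0 := by
      linear_combination d₃*g5 - (2*d₃+3*d₃^2)*hA2 - d₃*hA3
    have hII : d₁*d₃*(3*(d₁+d₃)*a + 2*d₃*(b+d) - 2*d₃*d) = 0 := by
      linear_combination d₃*g6 - (d₃+2*d₃^2)*hA2 - (2*d₃+d₃^2)*hA3
    have hu' : d₁*d₃*(d₁+d₃)*(b+d) = 0 := by linear_combination hI - hII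
    have hu : b + d = 0 :=
      (mul_eq_zero.mp hu').resolve_left (mul_ne_zero (mul_ne_zero hd₁ hd₃) hd)
    have hdd' : d₁*d₃*(3*(d₁+d₃)*a - 2*d₃*d) = 0 := by
      linear_combination hII - 2*d₁*d₃^2*hu
    have hdd : 3*(d₁+d₃)*a - 2*d₃*d = 0 :=
      (mul_eq_zero.mp hdd').resolve_left (mul_ne_zero hd₁ hd₃)
    have ha' : d₁*(d₃+d₁)*(d₃-d₁)*a = 0 := by
      linear_combination g7 - (4*d₃^2+5*d₃+2)*hA2 - (d₃+2)*hA3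
        - d₁*(4*d₃^2+5*d₃+d₁)*hu + d₁*(d₁-d₃-2)*hdd
    exact ⟨hu, hdd, hA2, hA3, hS, ha'⟩
  -- the candidate matrix satisfies the equation when d₁ = d₃
  have sat : d₁ = d₃ → ∀ t : ℝ,
      (pascal 3)ᵀ * ((vand ![c₂ - d₁, c₂, c₂ + d₃] 3)ᵀ
            * (t • !![(1:ℝ), 0, 0; -3, 1, 0; 3, -3, 1]) * vand ![c₂ - d₁, c₂, c₂ + d₃] 3)
          * pascal 3
        - (vand ![c₂ - d₁, c₂, c₂ + d₃] 3)ᵀ * (t • !![(1:ℝ), 0, 0; -3, 1, 0; 3, -3, 1])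
            * vand ![c₂ - d₁, c₂, c₂ + d₃] 3 = 0 := by
    intro h13 t
    subst h13
    ext i j
    fin_cases i <;> fin_cases j <;>
      · simp [vand, pascal, Matrix.mul_apply, Fin.sum_univ_three]
        try ring
  have htri : ∀ t : ℝ, ∀ i j : Fin 3, i < j →
      (t • !![(1:ℝ), 0, 0; -3, 1, 0; 3, -3, 1]) i j = 0 := by
    intro t i j hij
    fin_cases i <;> fin_cases j <;>
      first
        | exact absurd hij (by decide)
        | simp
  constructor
  · constructor
    · rintro ⟨X, hne, ht, hM⟩
      by_contra h13
      obtain ⟨hu, hdd, hA2, hA3, hS, ha'⟩ := main X ht hM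
      have ha : X 0 0 = 0 := by
        have h1 : d₁*(d₃+d₁) ≠ 0 := mul_ne_zero hd₁ (by rw [add_comm]; exact hd)
        have h2 : d₃ - d₁ ≠ 0 := sub_ne_zero.mpr (Ne.symm h13)
        have := (mul_eq_zero.mp ha').resolve_left (mul_ne_zero h1 h2)
        exact this
      have hd20 : X 2 0 = 0 := by
        have : d₃ * X 2 0 = 0 := by linear_combination -hdd/2 + (3*(d₁+d₃)/2)*ha
        exact (mul_eq_zero.mp this).resolve_left hd₃
      have hb : X 1 0 = 0 := by linarith
      have hf : X 2 2 = 0 := by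
        have : d₃ * X 2 2 = 0 := by linear_combination hA2 + d₁*ha + d₁*hb + d₁*hd20
        exact (mul_eq_zero.mp this).resolve_left hd₃
      have he : X 2 1 = 0 := by
        have : d₃ * X 2 1 = 0 := by
          linear_combination hA3 + d₁*ha - d₃*hd20 - d₃*hf
        exact (mul_eq_zero.mp this).resolve_left hd₃
      have hc : X 1 1 = 0 := by linarith
      refine hne ?_
      have z01 : X 0 1 = 0 := ht 0 1 (by decide)
      have z02 : X 0 2 = 0 := ht 0 2 (by decide)
      have z12 : X 1 2 = 0 := ht 1 2 (by decide)
      ext i j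
      fin_cases i <;> fin_cases j <;>
        simp [ha, hb, hc, hd20, he, hf, z01, z02, z12]
    · intro h13
      exact ⟨!![(1:ℝ), 0, 0; -3, 1, 0; 3, -3, 1], by
          intro h
          have := congrFun (congrFun h 0) 0
          norm_num at this,
        by simpa using htri 1,
        by simpa using sat h13 1⟩
  · intro h13 X
    constructor
    · rintro ⟨ht, hM⟩
      obtain ⟨hu, hdd, hA2, hA3, hS, -⟩ := main X ht hM
      refine ⟨X 0 0, ?_⟩
      have hd20 : X 2 0 = 3 * X 0 0 := by
        have h' : d₃ * (X 2 0 - 3 * X 0 0) = 0 := by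
          rw [← h13] at hdd ⊢
          linear_combination -hdd/2
        have := (mul_eq_zero.mp h').resolve_left hd₃
        linarith
      have hb : X 1 0 = -3 * X 0 0 := by linarith
      have hf : X 2 2 = X 0 0 := by
        have h' : d₃ * (X 2 2 - X 0 0) = 0 := by
          rw [← h13] at hA2 ⊢
          linear_combination hA2 + d₁*hb + d₁*hd20
        have := (mul_eq_zero.mp h').resolve_left hd₃
        linarith
      have he : X 2 1 = -3 * X 0 0 := by
        have h' : d₃ * (X 2 1 + 3 * X 0 0) = 0 := by
          rw [← h13] at hA3 ⊢
          linear_combination hA3 - d₁*hd20 - d₁*hf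
        have := (mul_eq_zero.mp h').resolve_left hd₃
        linarith
      have hc : X 1 1 = X 0 0 := by linarith
      have z01 : X 0 1 = 0 := ht 0 1 (by decide)
      have z02 : X 0 2 = 0 := ht 0 2 (by decide)
      have z12 : X 1 2 = 0 := ht 1 2 (by decide)
      ext i j
      fin_cases i <;> fin_cases j <;>
        · simp [z01, z02, z12, hb, hc, hd20, he, hf]
          try ring
    · rintro ⟨t, rfl⟩
      exact ⟨htri t, sat h13 t⟩
end
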